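/- arXiv:2405.18833 — 2 statements merged into one kernel-verified Lean document; each statement's English description precedes it below -/
import Mathlib

section
/- In Construction 1 with n ≥ 2, there exist two distinct bijections σ, τ from {0,…,n−1} to {1,…,n} whose weights differ by a positive amount of at most 1/(n−1)!: 0 < |Σ_{i=0}^{n−1} ‖u_i − v_{σ(i)}‖ − Σ_{i=0}^{n−1} ‖u_i − v_{τ(i)}‖| ≤ 1/(n−1)!. -/
open scoped BigOperators

namespace SqrtIndep

lemma sqrt_sf_irrational {s : ℕ} (hs : Squarefree s) {p : ℕ} (hp : p.Prime) (hps : p ∣ s) :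
    Irrational (Real.sqrt s) := by
  rw [irrational_sqrt_natCast_iff]
  rintro ⟨k, hk⟩
  have hpk : p ∣ k := hp.dvd_of_dvd_pow (n := 2) (by rw [sq, ← hk]; exact hps)
  have : p * p ∣ s := hk ▸ mul_dvd_mul hpk hpk
  exact hp.not_isUnit (hs p this)

def RS : List ℕ → Set ℝ
  | [] => Set.range (fun q : ℚ => (q : ℝ))
  | q :: L => {x | ∃ a ∈ RS L, ∃ b ∈ RS L, x = a + b * Real.sqrt q}

lemma RS_rat (L : List ℕ) (q : ℚ) : (q : ℝ) ∈ RS L := by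
  induction L generalizing q with
  | nil => exact ⟨q, rfl⟩
  | cons p L ih => exact ⟨q, ih q, 0, by simpa using ih 0, by simp⟩

lemma RS_zero (L : List ℕ) : (0 : ℝ) ∈ RS L := by simpa using RS_rat L 0

lemma RS_nat (L : List ℕ) (m : ℕ) : (m : ℝ) ∈ RS L := by
  simpa using RS_rat L m

lemma RS_add (L : List ℕ) : ∀ x ∈ RS L, ∀ y ∈ RS L, x + y ∈ RS L := by
  induction L with
  | nil => rintro x ⟨a, rfl⟩ y ⟨b, rfl⟩; exact ⟨a + b, by push_cast; ring⟩
  | cons p L ih =>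
      rintro x ⟨a, ha, b, hb, rfl⟩ y ⟨c, hc, d, hd, rfl⟩
      exact ⟨a + c, ih a ha c hc, b + d, ih b hb d hd, by ring⟩

lemma RS_neg (L : List ℕ) : ∀ x ∈ RS L, -x ∈ RS L := by
  induction L with
  | nil => rintro x ⟨a, rfl⟩; exact ⟨-a, by push_cast; ring⟩
  | cons p L ih =>
      rintro x ⟨a, ha, b, hb, rfl⟩
      exact ⟨-a, ih a ha, -b, ih b hb, by ring⟩

lemma RS_mul (L : List ℕ) : ∀ x ∈ RS L, ∀ y ∈ RS L, x * y ∈ RS L := by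
  induction L with
  | nil => rintro x ⟨a, rfl⟩ y ⟨b, rfl⟩; exact ⟨a * b, by push_cast; ring⟩
  | cons p L ih =>
      rintro x ⟨a, ha, b, hb, rfl⟩ y ⟨c, hc, d, hd, rfl⟩
      refine ⟨a * c + b * d * p, ?_, a * d + b * c, ?_, ?_⟩
      · exact RS_add L _ (ih a ha c hc) _ (ih _ (ih b hb d hd) _ (RS_nat L p))
      · exact RS_add L _ (ih a ha d hd) _ (ih b hb c hc)
      · have h : Real.sqrt p * Real.sqrt p = (p : ℝ) :=
          Real.mul_self_sqrt (by positivity)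
        linear_combination b * d * h

lemma RS_sub (L : List ℕ) : ∀ x ∈ RS L, ∀ y ∈ RS L, x - y ∈ RS L := by
  intro x hx y hy
  simpa [sub_eq_add_neg] using RS_add L x hx _ (RS_neg L y hy)

/-- Main simultaneous induction: `RS L` is closed under inverses, and square roots of
squarefree numbers with a prime factor outside `L` are not in `RS L`. -/
theorem RS_main (L : List ℕ) (hL : ∀ p ∈ L, Nat.Prime p) (hnd : L.Nodup) :
    (∀ x ∈ RS L, x ≠ 0 → x⁻¹ ∈ RS L) ∧
    (∀ s : ℕ, Squarefree s → (∃ p, Nat.Prime p ∧ p ∣ s ∧ p ∉ L) → Real.sqrt s ∉ RS L) := by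
  induction L with
  | nil =>
    constructor
    · rintro x ⟨a, rfl⟩ hx
      exact ⟨a⁻¹, by push_cast; rfl⟩
    · rintro s hs ⟨p, hp, hps, -⟩ ⟨a, ha⟩
      exact (sqrt_sf_irrational hs hp hps) ⟨a, ha⟩
  | cons q L ih =>
    obtain ⟨ihinv, ihnot⟩ := ih (fun p hp => hL p (List.mem_cons_of_mem _ hp)) hnd.of_cons
    have hq : Nat.Prime q := hL q (List.mem_cons_self)
    have hqL : q ∉ L := (List.nodup_cons.mp hnd).1
    have hq0 : (0:ℝ) < q := by exact_mod_cast hq.pos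
    have hsqq : Real.sqrt q * Real.sqrt q = (q : ℝ) := Real.mul_self_sqrt (by positivity)
    have hsqpos : (0:ℝ) < Real.sqrt q := Real.sqrt_pos.mpr hq0
    have hnotq : Real.sqrt q ∉ RS L := ihnot q hq.squarefree ⟨q, hq, dvd_rfl, hqL⟩
    constructor
    · rintro x ⟨a, ha, b, hb, rfl⟩ hx
      by_cases hb0 : b = 0
      · subst hb0
        have ha0 : a ≠ 0 := by simpa using hx
        exact ⟨a⁻¹, ihinv a ha ha0, 0, RS_zero L, by simp⟩
      · set D : ℝ := a * a - b * b * q with hD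
        have hDmem : D ∈ RS L :=
          RS_sub L _ (RS_mul L a ha a ha) _ (RS_mul L _ (RS_mul L b hb b hb) _ (RS_nat L q))
        have hD0 : D ≠ 0 := by
          intro h0
          have h0' : a * a - b * b * (q:ℝ) = 0 := by rw [← hD]; exact h0
          have hane : a ≠ 0 := by
            intro h; rw [h] at h0'
            have : b * b * (q:ℝ) = 0 := by linarith [h0']
            rcases mul_eq_zero.mp this with h' | h'
            · exact hb0 (by rcases mul_eq_zero.mp h' with h'' | h'' <;> exact h'')
            · exact absurd h' (ne_of_gt hq0)
          have hsq : (a * b⁻¹) ^ 2 = (q : ℝ) := by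
            field_simp
            nlinarith [h0']
          have habs : Real.sqrt q = |a * b⁻¹| := by
            rw [← hsq, Real.sqrt_sq_eq_abs]
          have hmem : a * b⁻¹ ∈ RS L := RS_mul L a ha _ (ihinv b hb hb0)
          rcases abs_cases (a * b⁻¹) with ⟨h1, -⟩ | ⟨h1, -⟩
          · exact hnotq (by rw [habs, h1]; exact hmem)
          · exact hnotq (by rw [habs, h1]; exact RS_neg L _ hmem)
        have hDinv : D⁻¹ ∈ RS L := ihinv D hDmem hD0
        have hprod : (a + b * Real.sqrt q) * ((a - b * Real.sqrt q) * D⁻¹) = 1 := by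
          have h1 : (a + b * Real.sqrt q) * (a - b * Real.sqrt q) = D := by
            simp only [hD]; linear_combination (-(b*b)) * hsqq
          rw [← mul_assoc, h1, mul_inv_cancel₀ hD0]
        have : (a + b * Real.sqrt q)⁻¹ = (a - b * Real.sqrt q) * D⁻¹ :=
          inv_eq_of_mul_eq_one_right hprod
        rw [this]
        refine ⟨a * D⁻¹, RS_mul L a ha _ hDinv, -(b * D⁻¹), RS_neg L _ (RS_mul L b hb _ hDinv), by ring⟩
    · rintro s hs ⟨p, hp, hps, hpL⟩ ⟨a, ha, b, hb, heq⟩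
      have hpq : p ≠ q := fun h => hpL (h ▸ List.mem_cons_self)
      have hpL' : p ∉ L := fun h => hpL (List.mem_cons_of_mem _ h)
      by_cases hb0 : b = 0
      · exact ihnot s hs ⟨p, hp, hps, hpL'⟩ (by rw [heq, hb0]; simpa using ha)
      by_cases ha0 : a = 0
      · -- √s = b √q
        have heq' : Real.sqrt s = b * Real.sqrt q := by rw [heq, ha0, zero_add]
        by_cases hqs : q ∣ s
        · obtain ⟨t, ht⟩ := hqs
          have hts : t ∣ s := ⟨q, by rw [ht]; ring⟩
          have htsf : Squarefree t := hs.squarefree_of_dvd hts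
          have hqt : ¬ q ∣ t := by
            intro hdvd
            exact hq.not_isUnit (hs q (by rw [ht]; exact mul_dvd_mul_left q hdvd))
          have hpt : p ∣ t := by
            rcases (Nat.Prime.dvd_mul hp).mp (ht ▸ hps) with h | h
            · exact absurd ((Nat.prime_dvd_prime_iff_eq hp hq).mp h) hpq
            · exact h
          have hsplit : Real.sqrt s = Real.sqrt q * Real.sqrt t := by
            rw [ht, Nat.cast_mul, Real.sqrt_mul (by positivity)]
          have hcan : Real.sqrt q * Real.sqrt t = Real.sqrt q * b := by
            rw [← hsplit, heq']; ring
          have hbt : Real.sqrt t = b := mul_left_cancel₀ (ne_of_gt hsqpos) hcan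
          exact ihnot t htsf ⟨p, hp, hpt, hpL'⟩ (by rw [hbt]; exact hb)
        · have hsf : Squarefree (s * q) := Nat.squarefree_mul_iff.mpr
            ⟨(Nat.coprime_comm.mp (hq.coprime_iff_not_dvd.mpr hqs)), hs, hq.squarefree⟩
          have hmem : Real.sqrt (((s * q : ℕ) : ℝ)) = b * q := by
            push_cast
            rw [Real.sqrt_mul (by positivity), heq']
            linear_combination b * hsqq
          exact ihnot (s * q) hsf ⟨p, hp, Dvd.dvd.mul_right hps q, hpL'⟩
            (by rw [hmem]; exact RS_mul L b hb _ (RS_nat L q))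
      · -- a ≠ 0, b ≠ 0 : √q rational over RS L
        have hsq : (a + b * Real.sqrt q) ^ 2 = (s : ℝ) := by
          rw [← heq]; exact Real.sq_sqrt (by positivity)
        have hab : (2 : ℝ) * a * b ≠ 0 := by
          intro h; rcases mul_eq_zero.mp h with h' | h'
          · rcases mul_eq_zero.mp h' with h'' | h''
            · norm_num at h''
            · exact ha0 h''
          · exact hb0 h'
        have habmem : (2:ℝ) * a * b ∈ RS L := RS_mul L _ (RS_mul L _ (RS_rat L 2) a ha) b hb
        have hqeq : Real.sqrt q = ((s:ℝ) - a*a - b*b*q) * ((2:ℝ)*a*b)⁻¹ := by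
          field_simp
          linear_combination hsq - b^2 * hsqq
        have : Real.sqrt q ∈ RS L := by
          rw [hqeq]
          exact RS_mul L _ (RS_sub L _ (RS_sub L _ (RS_nat L s) _
            (RS_mul L a ha a ha)) _
            (RS_mul L _ (RS_mul L b hb b hb) _ (RS_nat L q))) _
            (ihinv _ habmem hab)
        exact hnotq this
    
end SqrtIndep

namespace SqrtIndep

lemma RS_mono (q : ℕ) (L : List ℕ) : ∀ x ∈ RS L, x ∈ RS (q :: L) :=
  fun x hx => ⟨x, hx, 0, RS_zero L, by simp⟩

lemma RS_sqrt_mem (L : List ℕ) (s : ℕ) (hs : Squarefree s)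
    (hsub : ∀ p : ℕ, p.Prime → p ∣ s → p ∈ L) : Real.sqrt s ∈ RS L := by
  induction L generalizing s with
  | nil =>
    have : s = 1 := by
      by_contra h
      obtain ⟨p, hp, hps⟩ := Nat.exists_prime_and_dvd h
      exact absurd (hsub p hp hps) (List.not_mem_nil)
    rw [this]
    simpa using RS_nat [] 1
  | cons q L ih =>
    by_cases hqs : q ∣ s
    · obtain ⟨t, ht⟩ := hqs
      have hts : t ∣ s := ⟨q, by rw [ht]; ring⟩
      have htsf : Squarefree t := hs.squarefree_of_dvd hts
      have htmem : Real.sqrt t ∈ RS L := by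
        refine ih t htsf (fun p hp hpt => ?_)
        have hpqL : p ∈ q :: L := hsub p hp (hpt.trans hts)
        rcases List.mem_cons.mp hpqL with h | h
        · exfalso
          subst h
          exact hp.not_isUnit (hs p (by rw [ht]; exact mul_dvd_mul_left p hpt))
        · exact h
      refine ⟨0, RS_zero L, Real.sqrt t, htmem, ?_⟩
      rw [ht]
      push_cast
      rw [Real.sqrt_mul (by positivity)]
      ring
    · refine RS_mono q L _ (ih s hs (fun p hp hps => ?_))
      rcases List.mem_cons.mp (hsub p hp hps) with h | h
      · exact absurd (h ▸ hps) hqs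
      · exact h

/-- Linear independence of square roots of squarefree naturals whose primes lie in `L`. -/
theorem RS_indep (L : List ℕ) (hL : ∀ p ∈ L, Nat.Prime p) (hnd : L.Nodup) :
    ∀ (T : Finset ℕ) (c : ℕ → ℚ),
      (∀ s ∈ T, Squarefree s ∧ ∀ p : ℕ, p.Prime → p ∣ s → p ∈ L) →
      (∑ s ∈ T, (c s : ℝ) * Real.sqrt s) = 0 → ∀ s ∈ T, c s = 0 := by
  induction L with
  | nil =>
    intro T c hT hsum s hsT
    have h1 : ∀ s ∈ T, s = 1 := by
      intro s hs
      by_contra h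
      obtain ⟨p, hp, hps⟩ := Nat.exists_prime_and_dvd h
      exact absurd ((hT s hs).2 p hp hps) (List.not_mem_nil)
    have := h1 s hsT
    subst this
    have hTsub : T ⊆ {1} := fun x hx => Finset.mem_singleton.mpr (h1 x hx)
    rcases Finset.subset_singleton_iff.mp hTsub with h | h
    · exact absurd hsT (h ▸ Finset.notMem_empty 1)
    · rw [h] at hsum
      simpa using hsum
  | cons q L ih =>
    have hq : Nat.Prime q := hL q (List.mem_cons_self)
    have hqL : q ∉ L := (List.nodup_cons.mp hnd).1
    have hL' : ∀ p ∈ L, Nat.Prime p := fun p hp => hL p (List.mem_cons_of_mem _ hp)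
    have hnd' : L.Nodup := hnd.of_cons
    obtain ⟨ihinv, ihnot⟩ := RS_main L hL' hnd'
    have ihind := ih hL' hnd'
    intro T c hT hsum s hsT
    set T0 : Finset ℕ := T.filter (fun s => ¬ q ∣ s) with hT0
    set T1 : Finset ℕ := T.filter (fun s => q ∣ s) with hT1
    -- facts about elements of T1
    have hT1fact : ∀ s ∈ T1, s = q * (s / q) ∧ Squarefree (s / q) ∧ ¬ q ∣ (s / q) ∧
        (∀ p : ℕ, p.Prime → p ∣ s / q → p ∈ L) := by
      intro s hs
      obtain ⟨hsT', hqs⟩ := Finset.mem_filter.mp hs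
      obtain ⟨hsf, hprimes⟩ := hT s hsT'
      have heq : s = q * (s / q) := (Nat.mul_div_cancel' hqs).symm
      have hdvd : s / q ∣ s := Nat.div_dvd_of_dvd hqs
      have hsf' : Squarefree (s / q) := hsf.squarefree_of_dvd hdvd
      have hqnd : ¬ q ∣ (s / q) := by
        intro h
        refine hq.not_isUnit (hsf q ?_)
        calc q * q ∣ q * (s / q) := mul_dvd_mul_left q h
          _ = s := heq.symm
      refine ⟨heq, hsf', hqnd, fun p hp hpt => ?_⟩
      rcases List.mem_cons.mp (hprimes p hp (hpt.trans hdvd)) with h | h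
      · exact absurd (h ▸ hpt) hqnd
      · exact h
    -- x and y
    set x : ℝ := ∑ s ∈ T0, (c s : ℝ) * Real.sqrt s with hx
    set y : ℝ := ∑ s ∈ T1, (c s : ℝ) * Real.sqrt (s / q : ℕ) with hy
    have hxmem : x ∈ RS L := by
      rw [hx]
      refine Finset.sum_induction _ (· ∈ RS L) (fun a b ha hb => RS_add L a ha b hb) (RS_zero L) (fun s hs => ?_)
      obtain ⟨hsT', hqs⟩ := Finset.mem_filter.mp hs
      obtain ⟨hsf, hprimes⟩ := hT s hsT'
      refine RS_mul L _ (RS_rat L (c s)) _ (RS_sqrt_mem L s hsf (fun p hp hps => ?_))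
      rcases List.mem_cons.mp (hprimes p hp hps) with h | h
      · exact absurd (h ▸ hps) hqs
      · exact h
    have hymem : y ∈ RS L := by
      rw [hy]
      refine Finset.sum_induction _ (· ∈ RS L) (fun a b ha hb => RS_add L a ha b hb) (RS_zero L) (fun s hs => ?_)
      obtain ⟨-, hsf', -, hprimes'⟩ := hT1fact s hs
      exact RS_mul L _ (RS_rat L (c s)) _ (RS_sqrt_mem L _ hsf' hprimes')
    -- the splitting
    have hsplit : x + y * Real.sqrt q = 0 := by
      have hsum' : ∑ s ∈ T1, (c s : ℝ) * Real.sqrt s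
          + ∑ s ∈ T0, (c s : ℝ) * Real.sqrt s = 0 := by
        rw [hT0, hT1, Finset.sum_filter_add_sum_filter_not T (fun s => q ∣ s)]
        exact hsum
      have h1 : ∑ s ∈ T1, (c s : ℝ) * Real.sqrt s = y * Real.sqrt q := by
        rw [hy, Finset.sum_mul]
        refine Finset.sum_congr rfl (fun s hs => ?_)
        obtain ⟨heq, -, -, -⟩ := hT1fact s hs
        rw [mul_assoc]
        congr 1
        conv_lhs => rw [heq]
        push_cast
        rw [Real.sqrt_mul (by positivity)]
        ring
      rw [add_comm x (y * Real.sqrt q), ← h1]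
      exact hsum'
    -- y = 0 and x = 0
    have hy0 : y = 0 := by
      by_contra hy0
      have : Real.sqrt q = (-x) * y⁻¹ := by
        field_simp
        linarith [hsplit]
      exact ihnot q hq.squarefree ⟨q, hq, dvd_rfl, hqL⟩
        (this ▸ RS_mul L _ (RS_neg L x hxmem) _ (ihinv y hymem hy0))
    have hx0 : x = 0 := by
      have := hsplit
      rw [hy0] at this
      simpa using this
    -- conclude for s
    by_cases hqs : q ∣ s
    · -- s ∈ T1
      have hsT1 : s ∈ T1 := Finset.mem_filter.mpr ⟨hsT, hqs⟩
      have hinj : Set.InjOn (· / q) T1 := by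
        intro a ha b hb hab
        obtain ⟨hea, -, -, -⟩ := hT1fact a ha
        obtain ⟨heb, -, -, -⟩ := hT1fact b hb
        rw [hea, heb]
        simp only at hab
        rw [hab]
      have hyim : ∑ u ∈ T1.image (· / q), ((c (q * u) : ℚ) : ℝ) * Real.sqrt u = 0 := by
        rw [Finset.sum_image (fun a ha b hb h => hinj ha hb h)]
        rw [← hy0, hy]
        refine Finset.sum_congr rfl (fun a ha => ?_)
        obtain ⟨hea, -, -, -⟩ := hT1fact a ha
        congr 1
        rw [← hea]
      have hres := ihind (T1.image (· / q)) (fun u => c (q * u)) ?_ hyim (s / q)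
        (Finset.mem_image_of_mem _ hsT1)
      · obtain ⟨hes, -, -, -⟩ := hT1fact s hsT1
        have hres' : c (q * (s / q)) = 0 := hres
        rw [← hes] at hres'
        exact hres'
      · intro u hu
        obtain ⟨a, ha, rfl⟩ := Finset.mem_image.mp hu
        obtain ⟨-, h2, -, h4⟩ := hT1fact a ha
        exact ⟨h2, h4⟩
    · -- s ∈ T0
      have hsT0 : s ∈ T0 := Finset.mem_filter.mpr ⟨hsT, hqs⟩
      refine ihind T0 c (fun u hu => ?_) hx0 s hsT0
      obtain ⟨huT, hqu⟩ := Finset.mem_filter.mp hu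
      obtain ⟨hsf, hprimes⟩ := hT u huT
      refine ⟨hsf, fun p hp hpu => ?_⟩
      rcases List.mem_cons.mp (hprimes p hp hpu) with h | h
      · exact absurd (h ▸ hpu) hqu
      · exact h

/-- Square roots of distinct squarefree naturals are linearly independent over `ℚ`. -/
theorem sqrt_squarefree_linearIndependent (T : Finset ℕ) (hT : ∀ s ∈ T, Squarefree s)
    (c : ℕ → ℚ) (hsum : (∑ s ∈ T, (c s : ℝ) * Real.sqrt s) = 0) : ∀ s ∈ T, c s = 0 := by
  classical
  set N : ℕ := ∏ s ∈ T, s with hN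
  have hN0 : N ≠ 0 := by
    rw [hN]
    exact Finset.prod_ne_zero_iff.mpr (fun s hs => (hT s hs).ne_zero)
  refine RS_indep N.primeFactors.toList (fun p hp => ?_) N.primeFactors.nodup_toList T c
    (fun s hs => ⟨hT s hs, fun p hp hps => ?_⟩) hsum
  · exact Nat.prime_of_mem_primeFactors (Finset.mem_toList.mp hp)
  · rw [Finset.mem_toList, Nat.mem_primeFactors]
    exact ⟨hp, hps.trans (Finset.dvd_prod_of_mem _ hs), hN0⟩

end SqrtIndep

/-- A point of `ℝ²` from two coordinates. -/
noncomputable def mk2 (x y : ℝ) : EuclideanSpace ℝ (Fin 2) :=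
  (WithLp.equiv 2 (Fin 2 → ℝ)).symm ![x, y]

/-- Construction 1: the left-hand point `u_i = (0, i)`, for `0 ≤ i ≤ n-1`. -/
noncomputable def uPt (i : ℕ) : EuclideanSpace ℝ (Fin 2) := mk2 0 (i : ℝ)

/-- Construction 1: the right-hand point `v_j = (n⁴, j·n)`, for `1 ≤ j ≤ n`. -/
noncomputable def vPt (n j : ℕ) : EuclideanSpace ℝ (Fin 2) := mk2 ((n : ℝ) ^ 4) ((j : ℝ) * n)

/-- The weight of the perfect matching of Construction 1 that matches `u_i` with
`v_{σ(i)+1}`; as `σ` ranges over permutations of `Fin n`, `i ↦ σ(i)+1` ranges over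
all bijections from `{0,…,n-1}` to `{1,…,n}`. -/
noncomputable def matchWeight (n : ℕ) (σ : Equiv.Perm (Fin n)) : ℝ :=
  ∑ i : Fin n, ‖uPt (i : ℕ) - vPt n ((σ i : ℕ) + 1)‖


lemma norm_uv (n i j : ℕ) :
    ‖uPt i - vPt n j‖ = Real.sqrt ((n:ℝ)^8 + ((j:ℝ)*n - i)^2) := by
  rw [EuclideanSpace.norm_eq]
  congr 1
  rw [Fin.sum_univ_two]
  simp only [uPt, vPt, mk2, PiLp.sub_apply, WithLp.equiv_symm_apply, PiLp.toLp_apply, WithLp.ofLp_toLp,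
    Matrix.cons_val_zero, Matrix.cons_val_one, Matrix.head_cons, Real.norm_eq_abs, sq_abs]
  ring

namespace Stmt7
open SqrtIndep

/-- The squarefree part of `v`. -/
noncomputable def sf (v : ℕ) : ℕ := (Nat.sq_mul_squarefree v).choose

/-- The square part root of `v`. -/
noncomputable def af (v : ℕ) : ℕ := (Nat.sq_mul_squarefree v).choose_spec.choose

lemma sf_spec (v : ℕ) : (af v) ^ 2 * sf v = v ∧ Squarefree (sf v) :=
  (Nat.sq_mul_squarefree v).choose_spec.choose_spec

lemma sqrt_split (v : ℕ) : Real.sqrt v = (af v) * Real.sqrt (sf v) := by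
  conv_lhs => rw [← (sf_spec v).1]
  push_cast
  rw [Real.sqrt_mul (by positivity), Real.sqrt_sq (by positivity)]

lemma af_pos {v : ℕ} (hv : 0 < v) : 0 < af v := by
  rcases Nat.eq_zero_or_pos (af v) with h | h
  · exfalso
    have := (sf_spec v).1
    rw [h] at this
    simp at this
    omega
  · exact h

/-- Two numbers in the window `[n⁸+1, n⁸+n⁴]` with the same squarefree part are equal. -/
lemma sf_inj_window {n v w : ℕ} (hn : 1 ≤ n)
    (hv1 : n ^ 8 + 1 ≤ v) (hv2 : v ≤ n ^ 8 + n ^ 4)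
    (hw1 : n ^ 8 + 1 ≤ w) (hw2 : w ≤ n ^ 8 + n ^ 4)
    (hsf : sf v = sf w) : v = w := by
  -- auxiliary : no strict inequality possible
  have aux : ∀ v w : ℕ, n ^ 8 + 1 ≤ v → v ≤ n ^ 8 + n ^ 4 → n ^ 8 + 1 ≤ w →
      w ≤ n ^ 8 + n ^ 4 → sf v = sf w → v < w → False := by
    intro v w hv1 hv2 hw1 hw2 hsf hlt
    set a := sf v with ha
    set b := af v with hb
    set c := af w with hc
    have h1 : b ^ 2 * a = v := (sf_spec v).1
    have h2 : c ^ 2 * a = w := by rw [hc, hsf]; exact (sf_spec w).1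
    have ha1 : 1 ≤ a := by
      rcases Nat.eq_zero_or_pos a with h | h
      · exfalso; rw [h] at h1; omega
      · exact h
    have hb1 : 1 ≤ b := af_pos (by omega)
    have hbc : b < c := by
      have hlt2 : b ^ 2 * a < c ^ 2 * a := by omega
      have : b ^ 2 < c ^ 2 := lt_of_mul_lt_mul_right hlt2 (Nat.zero_le a)
      exact (Nat.pow_lt_pow_iff_left (by norm_num : (2:ℕ) ≠ 0)).mp this
    have hkey : (a * b) ^ 2 = a * v := by rw [← h1]; ring
    have hab : n ^ 4 < a * b := by
      have h4 : (n ^ 4) ^ 2 < (a * b) ^ 2 := by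
        rw [hkey]
        calc (n ^ 4) ^ 2 = n ^ 8 := by ring
          _ < v := by omega
          _ ≤ a * v := Nat.le_mul_of_pos_left v ha1
      exact (Nat.pow_lt_pow_iff_left (by norm_num : (2:ℕ) ≠ 0)).mp h4
    have hc1 : b + 1 ≤ c := hbc
    have hmono : (b + 1) ^ 2 * a ≤ c ^ 2 * a :=
      Nat.mul_le_mul_right a (Nat.pow_le_pow_left hc1 2)
    have hwv : v + 2 * (a * b) + a ≤ w := by nlinarith [hmono, h1, h2]
    linarith [hwv, hab, ha1, hv1, hw2]
  rcases lt_trichotomy v w with h | h | h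
  · exact absurd h (fun h => aux v w hv1 hv2 hw1 hw2 hsf h)
  · exact h
  · exact absurd h (fun h => aux w v hw1 hw2 hv1 hv2 hsf.symm h)

/-- The integer `(σ i + 1) * n - i`, the vertical distance of the matched pair. -/
def dval (n : ℕ) (σ : Equiv.Perm (Fin n)) (i : Fin n) : ℕ := ((σ i : ℕ) + 1) * n - i

/-- The natural number whose square root is the length of edge `i`. -/
def mval (n : ℕ) (σ : Equiv.Perm (Fin n)) (i : Fin n) : ℕ := n ^ 8 + (dval n σ i) ^ 2

lemma i_le (n : ℕ) (σ : Equiv.Perm (Fin n)) (i : Fin n) : (i : ℕ) ≤ ((σ i : ℕ) + 1) * n :=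
  le_trans (le_of_lt i.isLt) (Nat.le_mul_of_pos_left n (Nat.succ_pos _))

lemma dval_bounds (n : ℕ) (σ : Equiv.Perm (Fin n)) (i : Fin n) :
    1 ≤ dval n σ i ∧ dval n σ i ≤ n ^ 2 := by
  have h1 : (i : ℕ) < n := i.isLt
  have h2 : (σ i : ℕ) < n := (σ i).isLt
  have h3 : (i : ℕ) ≤ ((σ i : ℕ) + 1) * n := i_le n σ i
  constructor
  · have h4 : (i : ℕ) + 1 ≤ ((σ i : ℕ) + 1) * n := by nlinarith
    unfold dval
    omega
  · calc dval n σ i ≤ ((σ i : ℕ) + 1) * n := Nat.sub_le _ _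
      _ ≤ n * n := by nlinarith
      _ = n ^ 2 := by ring

lemma mval_bounds (n : ℕ) (σ : Equiv.Perm (Fin n)) (i : Fin n) :
    n ^ 8 + 1 ≤ mval n σ i ∧ mval n σ i ≤ n ^ 8 + n ^ 4 := by
  obtain ⟨h1, h2⟩ := dval_bounds n σ i
  unfold mval
  constructor
  · nlinarith
  · have : (dval n σ i) ^ 2 ≤ (n ^ 2) ^ 2 := Nat.pow_le_pow_left h2 2
    nlinarith

/-- Decoding : equal `mval`s force equal indices and equal images. -/
lemma mval_decode {n : ℕ} {σ τ : Equiv.Perm (Fin n)} {i j : Fin n}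
    (h : mval n σ i = mval n τ j) : i = j ∧ σ i = τ j := by
  have hd : dval n σ i = dval n τ j := by
    have h2 : (dval n σ i) ^ 2 = (dval n τ j) ^ 2 := by unfold mval at h; omega
    exact Nat.pow_left_injective (by norm_num) h2
  have hi : (i : ℕ) < n := i.isLt
  have hj : (j : ℕ) < n := j.isLt
  have hile := i_le n σ i
  have hjle := i_le n τ j
  unfold dval at hd
  have hAB : ((σ i : ℕ) + 1) * n + (j : ℕ) = ((τ j : ℕ) + 1) * n + (i : ℕ) := by omega
  set A := (σ i : ℕ) + 1 with hA
  set B := (τ j : ℕ) + 1 with hB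
  have hABeq : A = B := by
    rcases lt_trichotomy A B with h' | h' | h'
    · exfalso; have : A + 1 ≤ B := h'; nlinarith
    · exact h'
    · exfalso; have : B + 1 ≤ A := h'; nlinarith
  have hABn : A * n = B * n := by rw [hABeq]
  have hij : (i : ℕ) = (j : ℕ) := by omega
  have hst : (σ i : ℕ) = (τ j : ℕ) := by omega
  exact ⟨Fin.ext hij, Fin.ext hst⟩

lemma matchWeight_eq (n : ℕ) (σ : Equiv.Perm (Fin n)) :
    matchWeight n σ = ∑ i : Fin n, Real.sqrt ((mval n σ i : ℕ) : ℝ) := by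
  unfold matchWeight
  refine Finset.sum_congr rfl (fun i _ => ?_)
  rw [norm_uv]
  congr 1
  have hle := i_le n σ i
  have hcast : ((dval n σ i : ℕ) : ℝ) = ((σ i : ℕ) + 1) * n - (i : ℕ) := by
    unfold dval
    push_cast [Nat.cast_sub hle]
    ring
  unfold mval
  push_cast
  rw [hcast]

/-- Distinct permutations have distinct weights. -/
theorem weight_inj {n : ℕ} (hn : 1 ≤ n) (σ τ : Equiv.Perm (Fin n))
    (h : matchWeight n σ = matchWeight n τ) : σ = τ := by
  classical
  set T : Finset ℕ := (Finset.univ.image (mval n σ)) ∪ (Finset.univ.image (mval n τ)) with hT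
  have hTmemσ : ∀ i : Fin n, mval n σ i ∈ T := fun i =>
    Finset.mem_union_left _ (Finset.mem_image_of_mem _ (Finset.mem_univ i))
  have hTmemτ : ∀ i : Fin n, mval n τ i ∈ T := fun i =>
    Finset.mem_union_right _ (Finset.mem_image_of_mem _ (Finset.mem_univ i))
  have hTb : ∀ v ∈ T, n ^ 8 + 1 ≤ v ∧ v ≤ n ^ 8 + n ^ 4 := by
    intro v hv
    rcases Finset.mem_union.mp hv with h' | h' <;>
    · obtain ⟨i, -, rfl⟩ := Finset.mem_image.mp h'
      exact mval_bounds n _ i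
  have hsfInj : ∀ v ∈ T, ∀ w ∈ T, sf v = sf w → v = w := by
    intro v hv w hw hsf
    obtain ⟨hv1, hv2⟩ := hTb v hv
    obtain ⟨hw1, hw2⟩ := hTb w hw
    exact sf_inj_window hn hv1 hv2 hw1 hw2 hsf
  set S : Finset ℕ := T.image sf with hS
  set c : ℕ → ℚ := fun u =>
    (∑ i : Fin n, if sf (mval n σ i) = u then (af (mval n σ i) : ℚ) else 0)
    - (∑ i : Fin n, if sf (mval n τ i) = u then (af (mval n τ i) : ℚ) else 0) with hc
  have key : ∀ ρ : Equiv.Perm (Fin n), (∀ i : Fin n, mval n ρ i ∈ T) →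
      ∑ u ∈ S, (∑ i : Fin n, if sf (mval n ρ i) = u then (af (mval n ρ i) : ℝ) else 0)
        * Real.sqrt u = matchWeight n ρ := by
    intro ρ hmem
    rw [matchWeight_eq]
    have hstep : ∀ u ∈ S,
        (∑ i : Fin n, if sf (mval n ρ i) = u then (af (mval n ρ i) : ℝ) else 0) * Real.sqrt u
        = ∑ i : Fin n, (if sf (mval n ρ i) = u then (af (mval n ρ i) : ℝ) * Real.sqrt u else 0) := by
      intro u hu
      rw [Finset.sum_mul]
      exact Finset.sum_congr rfl (fun i _ => by rw [ite_mul, zero_mul])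
    rw [Finset.sum_congr rfl hstep, Finset.sum_comm]
    refine Finset.sum_congr rfl (fun i _ => ?_)
    have hmemS : sf (mval n ρ i) ∈ S := Finset.mem_image_of_mem _ (hmem i)
    rw [Finset.sum_ite_eq S (sf (mval n ρ i))
      (fun u => (af (mval n ρ i) : ℝ) * Real.sqrt u), if_pos hmemS]
    exact (sqrt_split _).symm
  have hpush : ∀ u : ℕ, ((c u : ℚ) : ℝ) =
      (∑ i : Fin n, if sf (mval n σ i) = u then (af (mval n σ i) : ℝ) else 0)
      - (∑ i : Fin n, if sf (mval n τ i) = u then (af (mval n τ i) : ℝ) else 0) := by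
    intro u
    simp only [hc, Rat.cast_sub, Rat.cast_sum, apply_ite (fun q : ℚ => (q : ℝ)),
      Rat.cast_natCast, Rat.cast_zero]
  have hsum : ∑ u ∈ S, (c u : ℝ) * Real.sqrt u = 0 := by
    calc ∑ u ∈ S, (c u : ℝ) * Real.sqrt u
        = ∑ u ∈ S, ((∑ i : Fin n, if sf (mval n σ i) = u then (af (mval n σ i) : ℝ) else 0)
            * Real.sqrt u
          - (∑ i : Fin n, if sf (mval n τ i) = u then (af (mval n τ i) : ℝ) else 0)
            * Real.sqrt u) := by
          refine Finset.sum_congr rfl (fun u _ => ?_)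
          rw [hpush u, sub_mul]
      _ = matchWeight n σ - matchWeight n τ := by
          rw [Finset.sum_sub_distrib, key σ hTmemσ, key τ hTmemτ]
      _ = 0 := by rw [h, sub_self]
  have hSsf : ∀ u ∈ S, Squarefree u := by
    intro u hu
    obtain ⟨v, -, rfl⟩ := Finset.mem_image.mp hu
    exact (sf_spec v).2
  have hzero := sqrt_squarefree_linearIndependent S hSsf c hsum
  refine Equiv.ext (fun i => ?_)
  set v : ℕ := mval n σ i with hv
  have hu : sf v ∈ S := Finset.mem_image_of_mem _ (hTmemσ i)
  have hcu : c (sf v) = 0 := hzero (sf v) hu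
  simp only [hc] at hcu
  have hA : (∑ j : Fin n, if sf (mval n σ j) = sf v then (af (mval n σ j) : ℚ) else 0) ≠ 0 := by
    have hpos : (0:ℚ) < ∑ j : Fin n, if sf (mval n σ j) = sf v then (af (mval n σ j) : ℚ) else 0 := by
      refine Finset.sum_pos' (fun j _ => ?_) ⟨i, Finset.mem_univ i, ?_⟩
      · split <;> positivity
      · rw [if_pos rfl]
        have : (0:ℕ) < af v := af_pos (by have := (mval_bounds n σ i).1; omega)
        exact_mod_cast this
    exact ne_of_gt hpos
  have hB : (∑ j : Fin n, if sf (mval n τ j) = sf v then (af (mval n τ j) : ℚ) else 0) ≠ 0 := by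
    intro h0
    rw [h0] at hcu
    simp at hcu
    exact hA hcu
  obtain ⟨j, -, hj⟩ := Finset.exists_ne_zero_of_sum_ne_zero hB
  have hjcond : sf (mval n τ j) = sf v := by
    by_contra hcond
    rw [if_neg hcond] at hj
    exact hj rfl
  have hveq : mval n τ j = v := hsfInj _ (hTmemτ j) _ (hTmemσ i) hjcond
  obtain ⟨hij, hst⟩ := mval_decode (hveq.symm : mval n σ i = mval n τ j)
  rw [hst, hij]

/-- Weight bounds. -/
lemma weight_lb (n : ℕ) (σ : Equiv.Perm (Fin n)) : (n:ℝ)^5 ≤ matchWeight n σ := by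
  rw [matchWeight_eq]
  have h : ∀ i : Fin n, (n:ℝ)^4 ≤ Real.sqrt ((mval n σ i : ℕ) : ℝ) := by
    intro i
    have h1 : ((n:ℝ)^4)^2 ≤ ((mval n σ i : ℕ) : ℝ) := by
      have := (mval_bounds n σ i).1
      have : ((n^8 : ℕ) : ℝ) ≤ ((mval n σ i : ℕ) : ℝ) := by exact_mod_cast (by omega : n^8 ≤ mval n σ i)
      push_cast at this
      nlinarith [this]
    calc (n:ℝ)^4 = Real.sqrt (((n:ℝ)^4)^2) := (Real.sqrt_sq (by positivity)).symm
      _ ≤ _ := Real.sqrt_le_sqrt h1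
  calc (n:ℝ)^5 = ∑ _i : Fin n, (n:ℝ)^4 := by
        rw [Finset.sum_const, Finset.card_univ, Fintype.card_fin, nsmul_eq_mul]; ring
    _ ≤ _ := Finset.sum_le_sum (fun i _ => h i)

lemma weight_ub (n : ℕ) (σ : Equiv.Perm (Fin n)) :
    matchWeight n σ ≤ (n:ℝ)^5 + n/2 := by
  rw [matchWeight_eq]
  have h : ∀ i : Fin n, Real.sqrt ((mval n σ i : ℕ) : ℝ) ≤ (n:ℝ)^4 + 1/2 := by
    intro i
    have h1 : ((mval n σ i : ℕ) : ℝ) ≤ ((n:ℝ)^4 + 1/2)^2 := by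
      have h2 : (mval n σ i : ℕ) ≤ n^8 + n^4 := (mval_bounds n σ i).2
      have h3 : ((mval n σ i : ℕ) : ℝ) ≤ ((n^8 + n^4 : ℕ) : ℝ) := by exact_mod_cast h2
      push_cast at h3
      nlinarith [h3]
    calc Real.sqrt ((mval n σ i : ℕ) : ℝ) ≤ Real.sqrt (((n:ℝ)^4 + 1/2)^2) := Real.sqrt_le_sqrt h1
      _ = (n:ℝ)^4 + 1/2 := Real.sqrt_sq (by positivity)
  calc (∑ i : Fin n, Real.sqrt ((mval n σ i : ℕ) : ℝ))
      ≤ ∑ _i : Fin n, ((n:ℝ)^4 + 1/2) := Finset.sum_le_sum (fun i _ => h i)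
    _ = (n:ℝ)^5 + n/2 := by
        rw [Finset.sum_const, Finset.card_univ, Fintype.card_fin, nsmul_eq_mul]; ring

end Stmt7

/-- In Construction 1 with `n ≥ 2`, there are two distinct perfect matchings whose weights
differ by a positive amount of at most `1/(n-1)!`. -/
theorem stmt_7 (n : ℕ) (hn : 2 ≤ n) :
    ∃ σ τ : Equiv.Perm (Fin n), σ ≠ τ ∧
      0 < |matchWeight n σ - matchWeight n τ| ∧
      |matchWeight n σ - matchWeight n τ| ≤ 1 / (Nat.factorial (n - 1) : ℝ) := by
  classical
  have hn1 : 1 ≤ n := le_trans (by norm_num) hn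
  set N : ℕ := Nat.factorial n with hN
  have hN2 : 2 ≤ N := by
    calc 2 = Nat.factorial 2 := by norm_num [Nat.factorial]
      _ ≤ N := Nat.factorial_le hn
  have hN1R : (1:ℝ) ≤ ((N - 1 : ℕ) : ℝ) := by
    have : 1 ≤ N - 1 := by omega
    exact_mod_cast this
  have hnR : (0:ℝ) < (n:ℝ) := by positivity
  set ε : ℝ := (n : ℝ) / (2 * ((N - 1 : ℕ) : ℝ)) with hε
  have hε0 : 0 < ε := by
    rw [hε]
    positivity
  have hLε : ((N - 1 : ℕ) : ℝ) * ε = (n : ℝ) / 2 := by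
    rw [hε, mul_div_assoc', div_eq_div_iff (by linarith : (0:ℝ) < 2 * ((N - 1 : ℕ) : ℝ)).ne'
      (by norm_num : (2:ℝ) ≠ 0)]
    ring
  set w : Equiv.Perm (Fin n) → ℝ := fun ρ => matchWeight n ρ with hw
  set g : Equiv.Perm (Fin n) → ℕ :=
    fun ρ => min (⌊(w ρ - (n:ℝ)^5) / ε⌋₊) (N - 2) with hg
  have hbound : ∀ ρ, ((g ρ : ℕ) : ℝ) * ε ≤ w ρ - (n:ℝ)^5 ∧
      w ρ - (n:ℝ)^5 ≤ (((g ρ : ℕ) : ℝ) + 1) * ε := by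
    intro ρ
    have hx0 : 0 ≤ w ρ - (n:ℝ)^5 := by
      have := Stmt7.weight_lb n ρ
      simp only [hw]
      linarith
    have hxU : w ρ - (n:ℝ)^5 ≤ (n:ℝ)/2 := by
      have := Stmt7.weight_ub n ρ
      simp only [hw]
      linarith
    by_cases hcase : ⌊(w ρ - (n:ℝ)^5) / ε⌋₊ ≤ N - 2
    · have hgeq : g ρ = ⌊(w ρ - (n:ℝ)^5) / ε⌋₊ := by
        rw [hg]; exact min_eq_left hcase
      constructor
      · rw [hgeq]
        have h1 : (⌊(w ρ - (n:ℝ)^5) / ε⌋₊ : ℝ) ≤ (w ρ - (n:ℝ)^5) / ε :=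
          Nat.floor_le (by positivity)
        calc (⌊(w ρ - (n:ℝ)^5) / ε⌋₊ : ℝ) * ε ≤ ((w ρ - (n:ℝ)^5) / ε) * ε :=
              mul_le_mul_of_nonneg_right h1 hε0.le
          _ = w ρ - (n:ℝ)^5 := by field_simp
      · rw [hgeq]
        have h1 : (w ρ - (n:ℝ)^5) / ε < (⌊(w ρ - (n:ℝ)^5) / ε⌋₊ : ℝ) + 1 :=
          Nat.lt_floor_add_one _
        have := mul_lt_mul_of_pos_right h1 hε0
        rw [div_mul_cancel₀ _ (ne_of_gt hε0)] at this
        linarith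
    · have hgeq : g ρ = N - 2 := by
        rw [hg]; exact min_eq_right (le_of_not_ge hcase)
      have hN21 : ((N - 2 : ℕ) : ℝ) + 1 = ((N - 1 : ℕ) : ℝ) := by
        have h1 : (N - 2) + 1 = N - 1 := by omega
        exact_mod_cast congrArg (Nat.cast : ℕ → ℝ) h1
      constructor
      · rw [hgeq]
        have h2 : (N - 1 : ℕ) ≤ ⌊(w ρ - (n:ℝ)^5) / ε⌋₊ := by omega
        have h3 : ((N - 1 : ℕ) : ℝ) ≤ (w ρ - (n:ℝ)^5) / ε := by
          calc ((N - 1 : ℕ) : ℝ) ≤ (⌊(w ρ - (n:ℝ)^5) / ε⌋₊ : ℝ) := by exact_mod_cast h2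
            _ ≤ (w ρ - (n:ℝ)^5) / ε := Nat.floor_le (by positivity)
        have h4 : ((N - 1 : ℕ) : ℝ) * ε ≤ w ρ - (n:ℝ)^5 := by
          have := mul_le_mul_of_nonneg_right h3 hε0.le
          rw [div_mul_cancel₀ _ (ne_of_gt hε0)] at this
          linarith
        have h5 : ((N - 2 : ℕ) : ℝ) ≤ ((N - 1 : ℕ) : ℝ) := by
          have : (N - 2 : ℕ) ≤ N - 1 := by omega
          exact_mod_cast this
        nlinarith
      · rw [hgeq, hN21, hLε]
        exact hxU
  -- pigeonhole
  have hcardP : Fintype.card (Equiv.Perm (Fin n)) = N := by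
    rw [Fintype.card_perm, Fintype.card_fin]
  have hlt : (Finset.range (N - 1)).card < (Finset.univ : Finset (Equiv.Perm (Fin n))).card := by
    rw [Finset.card_range, Finset.card_univ, hcardP]
    omega
  have hmaps : ∀ ρ ∈ (Finset.univ : Finset (Equiv.Perm (Fin n))), g ρ ∈ Finset.range (N - 1) := by
    intro ρ _
    rw [Finset.mem_range]
    have : g ρ ≤ N - 2 := min_le_right _ _
    omega
  obtain ⟨σ, -, τ, -, hst, hgg⟩ :=
    Finset.exists_ne_map_eq_of_card_lt_of_maps_to hlt hmaps
  refine ⟨σ, τ, hst, ?_, ?_⟩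
  · refine abs_pos.mpr (sub_ne_zero.mpr (fun hEq => hst ?_))
    exact Stmt7.weight_inj hn1 σ τ hEq
  · have hbσ := hbound σ
    have hbτ := hbound τ
    rw [hgg] at hbσ
    have hdiff : |matchWeight n σ - matchWeight n τ| ≤ ε := by
      have e1 : matchWeight n σ = w σ := rfl
      have e2 : matchWeight n τ = w τ := rfl
      rw [e1, e2]
      rw [abs_le]
      constructor <;> [skip; skip] <;> obtain ⟨a1, a2⟩ := hbσ <;> obtain ⟨b1, b2⟩ := hbτ <;> linarith
    refine le_trans hdiff ?_
    -- ε ≤ 1 / (n-1)!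
    have hfacpos : (0:ℝ) < (Nat.factorial (n - 1) : ℝ) := by
      exact_mod_cast Nat.factorial_pos (n - 1)
    have hNfac : (N : ℝ) = (n : ℝ) * (Nat.factorial (n - 1) : ℝ) := by
      have := Nat.mul_factorial_pred (by omega : n ≠ 0)
      exact_mod_cast (congrArg (Nat.cast : ℕ → ℝ) this).symm
    have hNsub : ((N - 1 : ℕ) : ℝ) = (N : ℝ) - 1 := by
      have : (1:ℕ) ≤ N := by omega
      push_cast [Nat.cast_sub this]
      ring
    rw [hε, div_le_div_iff₀ (by positivity) hfacpos]
    rw [hNsub]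
    have hNR : (2:ℝ) ≤ (N:ℝ) := by exact_mod_cast hN2
    nlinarith [hNfac, hNR]
end

section
/- Let N, n be positive integers and let A and B be disjoint sets of n points each in the integer grid {0,…,N}² ⊆ ℝ², with no three points of A ∪ B collinear. Let w* be the minimum of w(M) = Σ_{a∈A} ‖a − M(a)‖ over all bijections M : A → B. If M₁ and M₂ are bijections A → B with w(M₁) < w* + 1/(8N⁴) and w(M₂) < w* + 1/(8N⁴), then no edge of M₁ crosses an edge of M₂: for all a₁, a₂ ∈ A with a₁ ≠ a₂ and M₁(a₁) ≠ M₂(a₂), the open segments from a₁ to M₁(a₁) and from a₂ to M₂(a₂) are disjoint. In particular, the union of all near-minimum weight perfect matchings forms a planar graph (it has a straight-line drawing without crossings). -/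
open scoped BigOperators

attribute [local instance] Classical.propDecidable

/-- `p` is a point of the integer grid `{0,…,N}² ⊆ ℝ²`. -/
def OnGrid (N : ℕ) (p : EuclideanSpace ℝ (Fin 2)) : Prop :=
  ∀ i : Fin 2, ∃ m : ℕ, m ≤ N ∧ p i = (m : ℝ)

/-- The Euclidean weight of a perfect matching (bijection) `M` between
two finite point sets `A` and `B` in the plane. -/
noncomputable def ewWeight (A B : Finset (EuclideanSpace ℝ (Fin 2)))
    (M : {x // x ∈ A} → {y // y ∈ B}) : ℝ :=
  ∑ a : {x // x ∈ A},
    ‖(a : EuclideanSpace ℝ (Fin 2)) - (M a : EuclideanSpace ℝ (Fin 2))‖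

abbrev E2 := EuclideanSpace ℝ (Fin 2)

lemma collinear_of_cross_zero (P Q R : E2)
    (h : (Q 0 - P 0) * (R 1 - P 1) - (Q 1 - P 1) * (R 0 - P 0) = 0) :
    Collinear ℝ ({P, Q, R} : Set E2) := by
  by_cases hQ : Q = P
  · rw [show ({P, Q, R} : Set E2) = {P, R} by rw [hQ]; simp]
    exact collinear_pair ℝ P R
  · rw [collinear_iff_of_mem (Set.mem_insert P {Q, R})]
    refine ⟨Q - P, ?_⟩
    intro p hp
    have key : ∃ r : ℝ, R - P = r • (Q - P) := by
      by_cases h0 : Q 0 - P 0 = 0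
      · have h1 : Q 1 - P 1 ≠ 0 := by
          intro h1
          apply hQ
          ext i
          fin_cases i
          · simpa [sub_eq_zero] using h0
          · simpa [sub_eq_zero] using h1
        have hR0 : R 0 - P 0 = 0 := by
          have := h
          rw [h0] at this
          rcases mul_eq_zero.mp (by linarith : (Q 1 - P 1) * (R 0 - P 0) = 0) with hc | hc
          · exact absurd hc h1
          · exact hc
        refine ⟨(R 1 - P 1) / (Q 1 - P 1), ?_⟩
        ext i
        fin_cases i
        · show R 0 - P 0 = (R 1 - P 1) / (Q 1 - P 1) * (Q 0 - P 0)
          rw [h0, hR0, mul_zero]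
        · show R 1 - P 1 = (R 1 - P 1) / (Q 1 - P 1) * (Q 1 - P 1)
          field_simp
      · refine ⟨(R 0 - P 0) / (Q 0 - P 0), ?_⟩
        ext i
        fin_cases i
        · show R 0 - P 0 = (R 0 - P 0) / (Q 0 - P 0) * (Q 0 - P 0)
          field_simp
        · show R 1 - P 1 = (R 0 - P 0) / (Q 0 - P 0) * (Q 1 - P 1)
          field_simp
          nlinarith [h]
    obtain ⟨r, hr⟩ := key
    rcases hp with hp | hp | hp
    · exact ⟨0, by simp [hp]⟩
    · exact ⟨1, by simp [hp]⟩
    · refine ⟨r, ?_⟩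
      rw [Set.mem_singleton_iff.mp hp]
      have : r • (Q - P) +ᵥ P = r • (Q - P) + P := rfl
      rw [this, ← hr]
      abel
set_option maxHeartbeats 1000000

lemma sq_ge_four (c : ℝ) (h : 2 ≤ c) : 4 ≤ c^2 := by nlinarith

lemma le_of_sq_le_sq' (a b : ℝ) (ha : 0 ≤ a) (hb : 0 ≤ b) (h : a^2 ≤ b^2) : a ≤ b := by
  nlinarith

lemma term_bound (P R W x ab : ℝ) (hR0 : 0 ≤ R) (hRP : R ≤ P) (hPle : P ≤ ab)
    (hkey : P^2 - R^2 = 2*x*W) : x*W ≤ (P - R)*ab := by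
  have h := mul_nonneg (sub_nonneg.2 hRP) (by linarith : (0:ℝ) ≤ 2*ab - P - R)
  nlinarith [h, hkey]

lemma G2_bound (t s c : ℝ) (h1 : 1 ≤ t*c) (h2 : 1 ≤ (1-t)*c) (h3 : 1 ≤ s*c)
    (h4 : 1 ≤ (1-s)*c) : 2*(c-1) ≤ (t*(1-s) + s*(1-t))*c^2 := by
  have e1 : 0 ≤ (t*c - 1) * ((1-s)*c - 1) := mul_nonneg (by linarith) (by linarith)
  have e2 : 0 ≤ (s*c - 1) * ((1-t)*c - 1) := mul_nonneg (by linarith) (by linarith)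
  nlinarith [e1, e2]

lemma G4_bound_one (c K W α β dot : ℝ)
    (hαsq : α^2 ≤ 2) (hβsq : β^2 ≤ 2) (hα0 : 0 ≤ α) (hβ0 : 0 ≤ β)
    (hK : K = α*β + dot) (hW : W = α*β - dot)
    (hLag : K * W = c^2) (hc2 : 2 ≤ c) (hc0 : 0 < c) (hK0 : 0 < K) :
    K*(α+β) ≤ 8*(c-1) := by
  have habsq : (α*β)^2 ≤ 4 := by nlinarith [sq_nonneg α, sq_nonneg β]
  have hab0 : 0 ≤ α*β := mul_nonneg hα0 hβ0
  have hcle : c ≤ 2 := by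
    apply le_of_sq_le_sq' _ _ hc0.le (by norm_num)
    nlinarith [sq_nonneg (K - W), habsq]
  have hceq : c = 2 := le_antisymm hcle hc2
  have hKW4 : K * W = 4 := by rw [hLag, hceq]; norm_num
  have hable : α*β ≤ 2 := le_of_sq_le_sq' _ _ hab0 (by norm_num) (by nlinarith [habsq])
  have hKpWle : K + W ≤ 4 := by nlinarith
  have hKpWge : 4 ≤ K + W := by nlinarith [sq_nonneg (K - W), hKW4]
  have hKeq : K = 2 := by
    have hW4 : W = 4 - K := by linarith
    rw [hW4] at hKW4
    have e : (K - 2)^2 = 0 := by linear_combination -hKW4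
    have := sq_eq_zero_iff.mp e
    linarith
  have hale : α ≤ 2 := le_of_sq_le_sq' _ _ hα0 (by norm_num) (by linarith)
  have hble : β ≤ 2 := le_of_sq_le_sq' _ _ hβ0 (by norm_num) (by linarith)
  rw [hKeq, hceq]
  norm_num
  linarith

lemma G4_bound_big (Nr c K W α β dot : ℝ) (hNr : 2 ≤ Nr)
    (hαsq : α^2 ≤ 2*Nr^2) (hβsq : β^2 ≤ 2*Nr^2) (hα0 : 0 ≤ α) (hβ0 : 0 ≤ β)
    (hK : K = α*β + dot) (hW : W = α*β - dot)
    (hW0 : 0 < W) (hc2 : 2 ≤ c) (hK0 : 0 < K) :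
    K*(α+β) ≤ 8*Nr^4*(c-1) := by
  have hKb : K ≤ 4*Nr^2 := by nlinarith [sq_nonneg (α - β)]
  have hsb : (α+β)^2 ≤ 8*Nr^2 := by nlinarith [sq_nonneg (α - β)]
  have hQ0 : 0 ≤ K*(α+β) := mul_nonneg hK0.le (by linarith)
  have hK2 : K^2 ≤ 16*Nr^4 := by nlinarith [hKb, hK0.le]
  have hsq : (K*(α+β))^2 ≤ (8*Nr^4)^2 := by
    have e : (K*(α+β))^2 = K^2 * (α+β)^2 := by ring
    rw [e]
    calc K^2 * (α+β)^2 ≤ 16*Nr^4 * (8*Nr^2) :=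
          mul_le_mul hK2 hsb (sq_nonneg _) (by positivity)
      _ ≤ (8*Nr^4)^2 := by
          have h6 : (0:ℝ) ≤ Nr^6 := by positivity
          nlinarith [mul_nonneg h6 (by nlinarith : (0:ℝ) ≤ Nr^2 - 2)]
  have hle : K*(α+β) ≤ 8*Nr^4 := le_of_sq_le_sq' _ _ hQ0 (by positivity) hsq
  have h4' : 0 ≤ 8*Nr^4*(c-2) := mul_nonneg (by positivity) (by linarith)
  nlinarith [hle, h4']

lemma final_algebra (Nr t s α β R1 R2 u0 u1 v0 v1 : ℝ)
    (hNr : 1 ≤ Nr)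
    (ht0 : 0 < t) (ht1 : t < 1) (hs0 : 0 < s) (hs1 : s < 1)
    (hα : α^2 = u0^2 + u1^2) (hβ : β^2 = v0^2 + v1^2)
    (hα0 : 0 ≤ α) (hβ0 : 0 ≤ β) (hR10 : 0 ≤ R1) (hR20 : 0 ≤ R2)
    (hR1 : R1^2 = (t*u0 + (1-s)*v0)^2 + (t*u1 + (1-s)*v1)^2)
    (hR2 : R2^2 = ((1-t)*u0 + s*v0)^2 + ((1-t)*u1 + s*v1)^2)
    (hbu0 : u0^2 ≤ Nr^2) (hbu1 : u1^2 ≤ Nr^2) (hbv0 : v0^2 ≤ Nr^2) (hbv1 : v1^2 ≤ Nr^2)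
    (c : ℝ) (hcsq : c^2 = (u0*v1 - u1*v0)^2) (hc0' : 0 ≤ c)
    (h1 : 1 ≤ t * c) (h2 : 1 ≤ (1-t) * c)
    (h3 : 1 ≤ s * c) (h4 : 1 ≤ (1-s) * c)
    (hNe1 : Nr = 1 ∨ 2 ≤ Nr) :
    1 / (4*Nr^4) ≤ α + β - R1 - R2 := by
  obtain ⟨dot, hdot⟩ : ∃ x:ℝ, x = u0*v0 + u1*v1 := ⟨_, rfl⟩
  obtain ⟨K, hK⟩ : ∃ x:ℝ, x = α*β + dot := ⟨_, rfl⟩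
  obtain ⟨W, hW⟩ : ∃ x:ℝ, x = α*β - dot := ⟨_, rfl⟩
  have hLag : K * W = c^2 := by
    rw [hK, hW, hdot, hcsq]
    linear_combination β^2 * hα + (u0^2 + u1^2) * hβ
  have hc2 : 2 ≤ c := by
    have h : t*c + (1-t)*c = c := by ring
    linarith only [h, h1, h2]
  have hc0 : (0:ℝ) < c := by linarith only [hc2]
  have hcsq4 : 4 ≤ c^2 := sq_ge_four c hc2
  have hab0 : 0 ≤ α * β := mul_nonneg hα0 hβ0
  have hKpW : K + W = 2*(α*β) := by rw [hK, hW]; ring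
  have hW0 : 0 < W := by
    by_contra hcon
    push_neg at hcon
    have hKnn : 0 ≤ K := by linarith only [hKpW, hab0, hcon]
    have : K * W ≤ 0 := mul_nonpos_of_nonneg_of_nonpos hKnn hcon
    linarith only [this, hLag, hcsq4]
  have hK0 : 0 < K := by
    by_contra hcon
    push_neg at hcon
    have : K * W ≤ 0 := mul_nonpos_of_nonpos_of_nonneg hcon hW0.le
    linarith only [this, hLag, hcsq4]
  have hab1 : 0 < α*β := by linarith only [hKpW, hW0, hK0]
  have ha0 : 0 < α := by
    rcases lt_or_eq_of_le hα0 with h | h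
    · exact h
    · exfalso; rw [← h] at hab1; simp at hab1
  have hb0 : 0 < β := by
    rcases lt_or_eq_of_le hβ0 with h | h
    · exact h
    · exfalso; rw [← h] at hab1; simp at hab1
  obtain ⟨P1, hP1⟩ : ∃ x:ℝ, x = t*α + (1-s)*β := ⟨_, rfl⟩
  obtain ⟨P2, hP2⟩ : ∃ x:ℝ, x = (1-t)*α + s*β := ⟨_, rfl⟩
  have key1 : P1^2 - R1^2 = 2*(t*(1-s))*W := by
    rw [hP1, hW, hdot]
    linear_combination t^2 * hα + (1-s)^2 * hβ - hR1
  have key2 : P2^2 - R2^2 = 2*(s*(1-t))*W := by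
    rw [hP2, hW, hdot]
    linear_combination (1-t)^2 * hα + s^2 * hβ - hR2
  have m1 : 0 ≤ t*α := mul_nonneg ht0.le hα0
  have m2 : 0 ≤ (1-s)*β := mul_nonneg (by linarith only [hs1]) hβ0
  have m3 : 0 ≤ (1-t)*α := mul_nonneg (by linarith only [ht1]) hα0
  have m4 : 0 ≤ s*β := mul_nonneg hs0.le hβ0
  have hP10 : 0 ≤ P1 := by rw [hP1]; linarith only [m1, m2]
  have hP20 : 0 ≤ P2 := by rw [hP2]; linarith only [m3, m4]
  have mw1 : 0 ≤ t*(1-s)*W := mul_nonneg (mul_nonneg ht0.le (by linarith only [hs1])) hW0.le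
  have mw2 : 0 ≤ s*(1-t)*W := mul_nonneg (mul_nonneg hs0.le (by linarith only [ht1])) hW0.le
  have hR1P1 : R1 ≤ P1 := le_of_sq_le_sq' _ _ hR10 hP10 (by linarith only [key1, mw1])
  have hR2P2 : R2 ≤ P2 := le_of_sq_le_sq' _ _ hR20 hP20 (by linarith only [key2, mw2])
  have hP1le : P1 ≤ α + β := by rw [hP1]; linarith only [m3, m4]
  have hP2le : P2 ≤ α + β := by rw [hP2]; linarith only [m1, m2]
  have term1 : t*(1-s)*W ≤ (P1 - R1)*(α+β) :=
    term_bound P1 R1 W (t*(1-s)) (α+β) hR10 hR1P1 hP1le (by linarith only [key1])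
  have term2 : s*(1-t)*W ≤ (P2 - R2)*(α+β) :=
    term_bound P2 R2 W (s*(1-t)) (α+β) hR20 hR2P2 hP2le (by linarith only [key2])
  have gapfact : (t*(1-s) + s*(1-t))*W ≤ (α + β - R1 - R2)*(α+β) := by
    have e : (α + β - R1 - R2)*(α+β) = (P1 - R1)*(α+β) + (P2 - R2)*(α+β) := by
      rw [hP1, hP2]; ring
    have e2 : (t*(1-s) + s*(1-t))*W = t*(1-s)*W + s*(1-t)*W := by ring
    rw [e, e2]
    linarith only [term1, term2]
  have G2 := G2_bound t s c h1 h2 h3 h4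
  have G4 : K*(α+β) ≤ 8*Nr^4*(c-1) := by
    rcases hNe1 with h | h
    · subst h
      have hαb : α^2 ≤ 2 := by rw [hα]; linarith only [hbu0, hbu1]
      have hβb : β^2 ≤ 2 := by rw [hβ]; linarith only [hbv0, hbv1]
      have := G4_bound_one c K W α β dot hαb hβb hα0 hβ0 hK hW hLag hc2 hc0 hK0
      calc K*(α+β) ≤ 8*(c-1) := this
        _ = 8*(1:ℝ)^4*(c-1) := by norm_num
    · have hαb : α^2 ≤ 2*Nr^2 := by rw [hα]; linarith only [hbu0, hbu1]
      have hβb : β^2 ≤ 2*Nr^2 := by rw [hβ]; linarith only [hbv0, hbv1]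
      exact G4_bound_big Nr c K W α β dot h hαb hβb hα0 hβ0 hK hW hW0 hc2 hK0
  have hQpos : 0 < (α+β)*K := mul_pos (by linarith only [ha0, hb0]) hK0
  have key : 2*(c-1) ≤ (α + β - R1 - R2)*((α+β)*K) := by
    calc 2*(c-1) ≤ (t*(1-s) + s*(1-t))*c^2 := G2
      _ = ((t*(1-s) + s*(1-t))*W) * K := by rw [← hLag]; ring
      _ ≤ ((α + β - R1 - R2)*(α+β)) * K := mul_le_mul_of_nonneg_right gapfact hK0.le
      _ = (α + β - R1 - R2)*((α+β)*K) := by ring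
  rw [div_le_iff₀ (by positivity : (0:ℝ) < 4*Nr^4)]
  obtain ⟨Q, hQ⟩ : ∃ x:ℝ, x = (α+β)*K := ⟨_, rfl⟩
  obtain ⟨gv, hgv⟩ : ∃ x:ℝ, x = α + β - R1 - R2 := ⟨_, rfl⟩
  rw [show α + β - R1 - R2 = gv from hgv.symm]
  have hQpos' : 0 < Q := by rw [hQ]; exact hQpos
  have h5 : Q ≤ 4*Nr^4 * (gv * Q) := by
    calc Q = K*(α+β) := by rw [hQ]; ring
      _ ≤ 8*Nr^4*(c-1) := G4
      _ = 4*Nr^4 * (2*(c-1)) := by ring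
      _ ≤ 4*Nr^4 * (gv * Q) := by
          apply mul_le_mul_of_nonneg_left _ (by positivity)
          rw [hgv, hQ]; exact key
  by_contra hcon
  push_neg at hcon
  have h6 : gv * (4*Nr^4) * Q < 1 * Q := mul_lt_mul_of_pos_right hcon hQpos'
  rw [one_mul] at h6
  linarith only [h6, h5]

lemma diff_sq_le (x y Nr : ℝ) (hx0 : 0 ≤ x) (hxN : x ≤ Nr) (hy0 : 0 ≤ y) (hyN : y ≤ Nr) :
    (y - x)^2 ≤ Nr^2 := by nlinarith

lemma norm_sq_coords (w : E2) : ‖w‖^2 = (w 0)^2 + (w 1)^2 := by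
  rw [EuclideanSpace.norm_eq, Real.sq_sqrt (by positivity)]
  simp [Fin.sum_univ_two, sq_abs]

lemma one_le_abs_of_int (x : ℝ) (z : ℤ) (h : x = (z:ℝ)) (hne : x ≠ 0) : 1 ≤ |x| := by
  subst h
  have hz : z ≠ 0 := by exact_mod_cast hne
  have h1 : (1:ℤ) ≤ |z| := Int.one_le_abs hz
  calc (1:ℝ) = ((1:ℤ):ℝ) := by norm_num
    _ ≤ ((|z|:ℤ):ℝ) := by exact_mod_cast h1
    _ = |(z:ℝ)| := by push_cast; ring


lemma gap_lemma (N : ℕ) (hN : 0 < N) (a1 b1 a2 b2 : E2)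
    (g1 : OnGrid N a1) (g2 : OnGrid N b1) (g3 : OnGrid N a2) (g4 : OnGrid N b2)
    (hc1 : ¬ Collinear ℝ ({a2, b2, a1} : Set E2))
    (hc2 : ¬ Collinear ℝ ({a2, b2, b1} : Set E2))
    (hc3 : ¬ Collinear ℝ ({a1, b1, a2} : Set E2))
    (hc4 : ¬ Collinear ℝ ({a1, b1, b2} : Set E2))
    (X : E2) (hX1 : X ∈ openSegment ℝ a1 b1) (hX2 : X ∈ openSegment ℝ a2 b2) :
    1 / (4*(N:ℝ)^4) ≤ ‖a1 - b1‖ + ‖a2 - b2‖ - ‖a1 - b2‖ - ‖a2 - b1‖ := by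
  obtain ⟨p, t, hp, ht, hpt, hXe⟩ := hX1
  obtain ⟨q, s, hq, hs, hqs, hXe'⟩ := hX2
  have ht1 : t < 1 := by linarith
  have hs1 : s < 1 := by linarith
  have F0 : a1 0 + t*(b1 0 - a1 0) = a2 0 + s*(b2 0 - a2 0) := by
    have e1 : p * a1 0 + t * b1 0 = X 0 := by rw [← hXe]; simp
    have e2 : q * a2 0 + s * b2 0 = X 0 := by rw [← hXe']; simp
    have hp1 : p = 1 - t := by linarith
    have hq1 : q = 1 - s := by linarith
    rw [hp1] at e1; rw [hq1] at e2
    linear_combination e1 - e2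
  have F1 : a1 1 + t*(b1 1 - a1 1) = a2 1 + s*(b2 1 - a2 1) := by
    have e1 : p * a1 1 + t * b1 1 = X 1 := by rw [← hXe]; simp
    have e2 : q * a2 1 + s * b2 1 = X 1 := by rw [← hXe']; simp
    have hp1 : p = 1 - t := by linarith
    have hq1 : q = 1 - s := by linarith
    rw [hp1] at e1; rw [hq1] at e2
    linear_combination e1 - e2
  -- coordinates are naturals
  obtain ⟨n1, hn1N, hn1⟩ := g1 0
  obtain ⟨m1, hm1N, hm1⟩ := g1 1
  obtain ⟨n2, hn2N, hn2⟩ := g2 0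
  obtain ⟨m2, hm2N, hm2⟩ := g2 1
  obtain ⟨n3, hn3N, hn3⟩ := g3 0
  obtain ⟨m3, hm3N, hm3⟩ := g3 1
  obtain ⟨n4, hn4N, hn4⟩ := g4 0
  obtain ⟨m4, hm4N, hm4⟩ := g4 1
  obtain ⟨C, hC⟩ : ∃ x:ℝ, x = (b1 0 - a1 0)*(b2 1 - a2 1) - (b1 1 - a1 1)*(b2 0 - a2 0) :=
    ⟨_, rfl⟩
  -- the four cross products
  obtain ⟨cr1, hcr1⟩ : ∃ x:ℝ, x = (b2 0 - a2 0) * (a1 1 - a2 1) - (b2 1 - a2 1) * (a1 0 - a2 0) := ⟨_, rfl⟩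
  obtain ⟨cr2, hcr2⟩ : ∃ x:ℝ, x = (b2 0 - a2 0) * (b1 1 - a2 1) - (b2 1 - a2 1) * (b1 0 - a2 0) := ⟨_, rfl⟩
  obtain ⟨cr3, hcr3⟩ : ∃ x:ℝ, x = (b1 0 - a1 0) * (a2 1 - a1 1) - (b1 1 - a1 1) * (a2 0 - a1 0) := ⟨_, rfl⟩
  obtain ⟨cr4, hcr4⟩ : ∃ x:ℝ, x = (b1 0 - a1 0) * (b2 1 - a1 1) - (b1 1 - a1 1) * (b2 0 - a1 0) := ⟨_, rfl⟩
  have hcr1C : cr1 = t * C := by rw [hcr1, hC]; linear_combination (-(b2 1 - a2 1)) * F0 + (b2 0 - a2 0) * F1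
  have hcr2C : cr2 = -((1-t) * C) := by rw [hcr2, hC]; linear_combination (-(b2 1 - a2 1)) * F0 + (b2 0 - a2 0) * F1
  have hcr3C : cr3 = -(s * C) := by rw [hcr3, hC]; linear_combination (b1 1 - a1 1) * F0 + (-(b1 0 - a1 0)) * F1
  have hcr4C : cr4 = (1-s) * C := by rw [hcr4, hC]; linear_combination (b1 1 - a1 1) * F0 + (-(b1 0 - a1 0)) * F1
  have hcr1ne : cr1 ≠ 0 := fun h =>
    hc1 (collinear_of_cross_zero a2 b2 a1 (by rw [hcr1] at h; linear_combination h))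
  have hcr2ne : cr2 ≠ 0 := fun h =>
    hc2 (collinear_of_cross_zero a2 b2 b1 (by rw [hcr2] at h; linear_combination h))
  have hcr3ne : cr3 ≠ 0 := fun h =>
    hc3 (collinear_of_cross_zero a1 b1 a2 (by rw [hcr3] at h; linear_combination h))
  have hcr4ne : cr4 ≠ 0 := fun h =>
    hc4 (collinear_of_cross_zero a1 b1 b2 (by rw [hcr4] at h; linear_combination h))
  -- integrality: each cross has absolute value >= 1
  have h1int : 1 ≤ |cr1| := one_le_abs_of_int cr1
    (((n4:ℤ)-n3)*((m1:ℤ)-m3) - ((m4:ℤ)-m3)*((n1:ℤ)-n3))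
    (by rw [hcr1, hn4, hn3, hm1, hm3, hm4, hn1]; push_cast; ring) hcr1ne
  have h2int : 1 ≤ |cr2| := one_le_abs_of_int cr2
    (((n4:ℤ)-n3)*((m2:ℤ)-m3) - ((m4:ℤ)-m3)*((n2:ℤ)-n3))
    (by rw [hcr2, hn4, hn3, hm2, hm3, hm4, hn2]; push_cast; ring) hcr2ne
  have h3int : 1 ≤ |cr3| := one_le_abs_of_int cr3
    (((n2:ℤ)-n1)*((m3:ℤ)-m1) - ((m2:ℤ)-m1)*((n3:ℤ)-n1))
    (by rw [hcr3, hn2, hn1, hm3, hm1, hm2, hn3]; push_cast; ring) hcr3ne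
  have h4int : 1 ≤ |cr4| := one_le_abs_of_int cr4
    (((n2:ℤ)-n1)*((m4:ℤ)-m1) - ((m2:ℤ)-m1)*((n4:ℤ)-n1))
    (by rw [hcr4, hn2, hn1, hm4, hm1, hm2, hn4]; push_cast; ring) hcr4ne
  have h1c : 1 ≤ t * |C| := by
    rw [hcr1C, abs_mul, abs_of_pos ht] at h1int; exact h1int
  have h2c : 1 ≤ (1-t) * |C| := by
    rw [hcr2C, abs_neg, abs_mul, abs_of_pos (by linarith : (0:ℝ) < 1 - t)] at h2int
    exact h2int
  have h3c : 1 ≤ s * |C| := by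
    rw [hcr3C, abs_neg, abs_mul, abs_of_pos hs] at h3int; exact h3int
  have h4c : 1 ≤ (1-s) * |C| := by
    rw [hcr4C, abs_mul, abs_of_pos (by linarith : (0:ℝ) < 1 - s)] at h4int
    exact h4int
  -- norm squares
  have hal : ‖a1 - b1‖^2 = (b1 0 - a1 0)^2 + (b1 1 - a1 1)^2 := by
    rw [norm_sq_coords]; simp only [PiLp.sub_apply]; ring
  have hbe : ‖a2 - b2‖^2 = (b2 0 - a2 0)^2 + (b2 1 - a2 1)^2 := by
    rw [norm_sq_coords]; simp only [PiLp.sub_apply]; ring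
  have hR1 : ‖a1 - b2‖^2 = (t*(b1 0 - a1 0) + (1-s)*(b2 0 - a2 0))^2
      + (t*(b1 1 - a1 1) + (1-s)*(b2 1 - a2 1))^2 := by
    rw [norm_sq_coords]; simp only [PiLp.sub_apply]
    have c0 : a1 0 - b2 0 = -(t*(b1 0 - a1 0) + (1-s)*(b2 0 - a2 0)) := by
      linear_combination F0
    have c1 : a1 1 - b2 1 = -(t*(b1 1 - a1 1) + (1-s)*(b2 1 - a2 1)) := by
      linear_combination F1
    rw [c0, c1]; ring
  have hR2 : ‖a2 - b1‖^2 = ((1-t)*(b1 0 - a1 0) + s*(b2 0 - a2 0))^2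
      + ((1-t)*(b1 1 - a1 1) + s*(b2 1 - a2 1))^2 := by
    rw [norm_sq_coords]; simp only [PiLp.sub_apply]
    have c0 : a2 0 - b1 0 = -((1-t)*(b1 0 - a1 0) + s*(b2 0 - a2 0)) := by
      linear_combination -F0
    have c1 : a2 1 - b1 1 = -((1-t)*(b1 1 - a1 1) + s*(b2 1 - a2 1)) := by
      linear_combination -F1
    rw [c0, c1]; ring
  -- bounds
  have hNr : (1:ℝ) ≤ (N:ℝ) := by exact_mod_cast hN
  have hbu0 : (b1 0 - a1 0)^2 ≤ (N:ℝ)^2 :=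
    diff_sq_le (a1 0) (b1 0) (N:ℝ) (by rw [hn1]; positivity)
      (by rw [hn1]; exact_mod_cast hn1N) (by rw [hn2]; positivity)
      (by rw [hn2]; exact_mod_cast hn2N)
  have hbu1 : (b1 1 - a1 1)^2 ≤ (N:ℝ)^2 :=
    diff_sq_le (a1 1) (b1 1) (N:ℝ) (by rw [hm1]; positivity)
      (by rw [hm1]; exact_mod_cast hm1N) (by rw [hm2]; positivity)
      (by rw [hm2]; exact_mod_cast hm2N)
  have hbv0 : (b2 0 - a2 0)^2 ≤ (N:ℝ)^2 :=
    diff_sq_le (a2 0) (b2 0) (N:ℝ) (by rw [hn3]; positivity)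
      (by rw [hn3]; exact_mod_cast hn3N) (by rw [hn4]; positivity)
      (by rw [hn4]; exact_mod_cast hn4N)
  have hbv1 : (b2 1 - a2 1)^2 ≤ (N:ℝ)^2 :=
    diff_sq_le (a2 1) (b2 1) (N:ℝ) (by rw [hm3]; positivity)
      (by rw [hm3]; exact_mod_cast hm3N) (by rw [hm4]; positivity)
      (by rw [hm4]; exact_mod_cast hm4N)
  have hcsq : |C|^2 = ((b1 0 - a1 0)*(b2 1 - a2 1) - (b1 1 - a1 1)*(b2 0 - a2 0))^2 := by
    rw [sq_abs, hC]
  have hNe1 : (N:ℝ) = 1 ∨ 2 ≤ (N:ℝ) := by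
    have h : N = 1 ∨ 2 ≤ N := by omega
    rcases h with h | h
    · left; rw [h]; norm_num
    · right; exact_mod_cast h
  exact final_algebra (N:ℝ) t s ‖a1 - b1‖ ‖a2 - b2‖ ‖a1 - b2‖ ‖a2 - b1‖
    (b1 0 - a1 0) (b1 1 - a1 1) (b2 0 - a2 0) (b2 1 - a2 1)
    hNr ht ht1 hs hs1 hal hbe (norm_nonneg _) (norm_nonneg _) (norm_nonneg _)
    (norm_nonneg _) hR1 hR2 hbu0 hbu1 hbv0 hbv1 |C| hcsq (abs_nonneg _)
    h1c h2c h3c h4c hNe1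

lemma weight_swap (A B : Finset (EuclideanSpace ℝ (Fin 2)))
    (M₁ M₂ M₅ M₆ : {x // x ∈ A} → {y // y ∈ B}) (a₁ a₂ : {x // x ∈ A}) (hne : a₁ ≠ a₂)
    (hoff : ∀ a, a ≠ a₁ → a ≠ a₂ →
      ‖(a:E2) - (M₅ a:E2)‖ + ‖(a:E2) - (M₆ a:E2)‖
        = ‖(a:E2) - (M₁ a:E2)‖ + ‖(a:E2) - (M₂ a:E2)‖)
    (h1 : ‖(a₁:E2) - (M₅ a₁:E2)‖ + ‖(a₁:E2) - (M₆ a₁:E2)‖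
        = ‖(a₁:E2) - (M₁ a₁:E2)‖ + ‖(a₁:E2) - (M₂ a₁:E2)‖
          + (‖(a₁:E2) - (M₂ a₂:E2)‖ - ‖(a₁:E2) - (M₁ a₁:E2)‖))
    (h2 : ‖(a₂:E2) - (M₅ a₂:E2)‖ + ‖(a₂:E2) - (M₆ a₂:E2)‖
        = ‖(a₂:E2) - (M₁ a₂:E2)‖ + ‖(a₂:E2) - (M₂ a₂:E2)‖
          + (‖(a₂:E2) - (M₁ a₁:E2)‖ - ‖(a₂:E2) - (M₂ a₂:E2)‖)) :
    ewWeight A B M₅ + ewWeight A B M₆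
      = ewWeight A B M₁ + ewWeight A B M₂
        - (‖(a₁:E2) - (M₁ a₁:E2)‖ + ‖(a₂:E2) - (M₂ a₂:E2)‖
           - ‖(a₁:E2) - (M₂ a₂:E2)‖ - ‖(a₂:E2) - (M₁ a₁:E2)‖) := by
  classical
  set F : {x // x ∈ A} → ℝ := fun a =>
    ‖(a:E2) - (M₅ a:E2)‖ + ‖(a:E2) - (M₆ a:E2)‖
      - ‖(a:E2) - (M₁ a:E2)‖ - ‖(a:E2) - (M₂ a:E2)‖ with hF
  have hzero : ∀ x ∈ (Finset.univ : Finset {x // x ∈ A}),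
      x ∉ ({a₁, a₂} : Finset {x // x ∈ A}) → F x = 0 := by
    intro x _ hx
    simp only [Finset.mem_insert, Finset.mem_singleton] at hx
    push_neg at hx
    have := hoff x hx.1 hx.2
    rw [hF]
    dsimp only
    linarith
  have hsub := Finset.sum_subset (Finset.subset_univ ({a₁, a₂} : Finset {x // x ∈ A})) hzero
  have hpair : ∑ x ∈ ({a₁, a₂} : Finset {x // x ∈ A}), F x = F a₁ + F a₂ :=
    Finset.sum_pair hne
  have hsplit : ∑ a : {x // x ∈ A}, F a
      = ewWeight A B M₅ + ewWeight A B M₆ - ewWeight A B M₁ - ewWeight A B M₂ := by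
    rw [hF]
    simp only [ewWeight]
    rw [← Finset.sum_add_distrib, ← Finset.sum_sub_distrib, ← Finset.sum_sub_distrib]
  have hFa₁ : F a₁ = ‖(a₁:E2) - (M₂ a₂:E2)‖ - ‖(a₁:E2) - (M₁ a₁:E2)‖ := by
    rw [hF]; dsimp only; linarith
  have hFa₂ : F a₂ = ‖(a₂:E2) - (M₁ a₁:E2)‖ - ‖(a₂:E2) - (M₂ a₂:E2)‖ := by
    rw [hF]; dsimp only; linarith
  have : ewWeight A B M₅ + ewWeight A B M₆ - ewWeight A B M₁ - ewWeight A B M₂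
      = F a₁ + F a₂ := by rw [← hsplit, ← hpair, hsub]
  rw [hFa₁, hFa₂] at this
  linarith

lemma exchange (A B : Finset (EuclideanSpace ℝ (Fin 2))) (n : ℕ)
    (hcardA : A.card = n) (hcardB : B.card = n)
    (M₁ M₂ : {x // x ∈ A} → {y // y ∈ B})
    (hM₁ : Function.Bijective M₁) (hM₂ : Function.Bijective M₂)
    (a₁ a₂ : {x // x ∈ A}) (hne : a₁ ≠ a₂) :
    ∃ M₅ M₆ : {x // x ∈ A} → {y // y ∈ B},
      Function.Bijective M₅ ∧ Function.Bijective M₆ ∧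
      ewWeight A B M₅ + ewWeight A B M₆
        = ewWeight A B M₁ + ewWeight A B M₂
          - (‖(a₁:E2) - (M₁ a₁:E2)‖ + ‖(a₂:E2) - (M₂ a₂:E2)‖
             - ‖(a₁:E2) - (M₂ a₂:E2)‖ - ‖(a₂:E2) - (M₁ a₁:E2)‖) := by
  classical
  have hcard : Fintype.card {x // x ∈ A} = Fintype.card {y // y ∈ B} := by
    rw [Fintype.card_coe, Fintype.card_coe, hcardA, hcardB]
  set e₁ := Equiv.ofBijective M₁ hM₁ with he₁
  set e₂ := Equiv.ofBijective M₂ hM₂ with he₂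
  set g : Equiv.Perm {x // x ∈ A} := e₂.trans e₁.symm with hgdef
  have hg : ∀ a, M₁ (g a) = M₂ a := fun a => e₁.apply_symm_apply (e₂ a)
  have hM₁inj : Function.Injective M₁ := hM₁.1
  have bij_of_inj : ∀ M : {x // x ∈ A} → {y // y ∈ B},
      Function.Injective M → Function.Bijective M := fun M h =>
    (Fintype.bijective_iff_injective_and_card M).2 ⟨h, hcard⟩
  have hpowg : ∀ (i j : ℕ) (a : {x // x ∈ A}), (g ^ (i + j)) a = (g ^ i) ((g ^ j) a) := by
    intro i j a
    rw [pow_add]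
    rfl
  have hsucc : ∀ (j : ℕ) (a : {x // x ∈ A}), (g ^ (j + 1)) a = g ((g ^ j) a) := by
    intro j a
    rw [pow_succ']
    rfl
  by_cases horb : ∃ j : ℕ, (g ^ j) a₁ = a₂
  · -- Case 1 : a₂ in the forward g-orbit of a₁
    set k := Nat.find horb with hkdef
    have hk : (g ^ k) a₁ = a₂ := Nat.find_spec horb
    have hk0 : k ≠ 0 := by
      intro h
      rw [h] at hk
      simp at hk
      exact hne hk
    have hdist : ∀ i j : ℕ, i < j → j ≤ k → (g ^ i) a₁ ≠ (g ^ j) a₁ := by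
      intro i j hij hjk heq
      have h1 : (g ^ (j - i)) a₁ = a₁ := by
        apply (g ^ i).injective
        have e : (g ^ i) ((g ^ (j - i)) a₁) = (g ^ j) a₁ := by
          rw [← hpowg, show i + (j - i) = j from by omega]
        rw [e, ← heq]
      have h2 : (g ^ (k - (j - i))) a₁ = a₂ := by
        rw [← hk]
        have e : (g ^ k) a₁ = (g ^ (k - (j - i))) ((g ^ (j - i)) a₁) := by
          rw [← hpowg, show k - (j - i) + (j - i) = k from by omega]
        rw [e, h1]
      exact Nat.find_min horb (show k - (j - i) < k by omega) h2
    set S : {x // x ∈ A} → Prop := fun a => ∃ j, j < k ∧ (g ^ j) a₁ = a with hSdef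
    set T : {x // x ∈ A} → Prop := fun a => ∃ j, 1 ≤ j ∧ j ≤ k ∧ (g ^ j) a₁ = a with hTdef
    have hSa₁ : S a₁ := ⟨0, Nat.pos_of_ne_zero hk0, by simp⟩
    have hSa₂ : ¬ S a₂ := by
      rintro ⟨j, hj, he⟩
      exact hdist j k hj le_rfl (he.trans hk.symm)
    have hTa₂ : T a₂ := ⟨k, Nat.one_le_iff_ne_zero.2 hk0, le_rfl, hk⟩
    have hTa₁ : ¬ T a₁ := by
      rintro ⟨j, hj1, hjk, he⟩
      exact hdist 0 j hj1 hjk (by simpa using he.symm)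
    set rep₅ : {x // x ∈ A} → {x // x ∈ A} := fun a =>
      if S a then g a else if a = a₂ then a₁ else a with hrep₅
    set rep₆ : {x // x ∈ A} → {x // x ∈ A} := fun a =>
      if T a then a else if a = a₁ then g a₂ else g a with hrep₆
    set M₅ : {x // x ∈ A} → {y // y ∈ B} := fun a => M₁ (rep₅ a) with hM₅
    set M₆ : {x // x ∈ A} → {y // y ∈ B} := fun a => M₁ (rep₆ a) with hM₆
    have mix₅ : ∀ x y, S x → ¬ S y → rep₅ x = rep₅ y → False := by
      intro x y hx hy hxy
      obtain ⟨j, hj, he⟩ := hx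
      rw [hrep₅] at hxy
      dsimp only at hxy
      rw [if_pos ⟨j, hj, he⟩, if_neg hy] at hxy
      by_cases hy2 : y = a₂
      · rw [if_pos hy2] at hxy
        have hgx : (g ^ (j + 1)) a₁ = a₁ := by rw [hsucc, he, hxy]
        exact hdist 0 (j + 1) (by omega) (by omega) (by simpa using hgx.symm)
      · rw [if_neg hy2] at hxy
        have hyv : y = (g ^ (j + 1)) a₁ := by rw [← hxy, hsucc, he]
        rcases Nat.lt_or_ge (j + 1) k with hlt | hge
        · exact hy ⟨j + 1, hlt, hyv.symm⟩
        · have heqk : j + 1 = k := by omega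
          exact hy2 (by rw [hyv, heqk, hk])
    have hrep₅inj : Function.Injective rep₅ := by
      intro x y hxy
      by_cases hx : S x <;> by_cases hy : S y
      · rw [hrep₅] at hxy; dsimp only at hxy
        rw [if_pos hx, if_pos hy] at hxy
        exact g.injective hxy
      · exact absurd hxy (by intro h; exact mix₅ x y hx hy h)
      · exact absurd hxy.symm (by intro h; exact mix₅ y x hy hx h)
      · rw [hrep₅] at hxy; dsimp only at hxy
        rw [if_neg hx, if_neg hy] at hxy
        by_cases hx2 : x = a₂ <;> by_cases hy2 : y = a₂
        · rw [hx2, hy2]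
        · rw [if_pos hx2, if_neg hy2] at hxy
          exact absurd (hxy ▸ hSa₁) hy
        · rw [if_neg hx2, if_pos hy2] at hxy
          exact absurd (hxy ▸ hSa₁) hx
        · rwa [if_neg hx2, if_neg hy2] at hxy
    have mix₆ : ∀ x y, T x → ¬ T y → rep₆ x = rep₆ y → False := by
      intro x y hx hy hxy
      obtain ⟨j, hj1, hjk, he⟩ := hx
      rw [hrep₆] at hxy
      dsimp only at hxy
      rw [if_pos ⟨j, hj1, hjk, he⟩, if_neg hy] at hxy
      by_cases hy1 : y = a₁
      · rw [if_pos hy1] at hxy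
        -- x = g a₂ : g^j a₁ = g^(k+1) a₁
        have hx2 : (g ^ j) a₁ = (g ^ (k + 1)) a₁ := by
          rw [he, hxy, hsucc, hk]
        have h1 : (g ^ (k + 1 - j)) a₁ = a₁ := by
          apply (g ^ j).injective
          have e : (g ^ j) ((g ^ (k + 1 - j)) a₁) = (g ^ (k + 1)) a₁ := by
            rw [← hpowg, show j + (k + 1 - j) = k + 1 from by omega]
          rw [e, ← hx2]
        exact hdist 0 (k + 1 - j) (by omega) (by omega) (by simpa using h1.symm)
      · rw [if_neg hy1] at hxy
        -- x = g y : y = g^(j-1) a₁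
        have hyv : g ((g ^ (j - 1)) a₁) = g y := by
          rw [← hsucc]
          have : j - 1 + 1 = j := by omega
          rw [this, he, hxy]
        have hyv' : y = (g ^ (j - 1)) a₁ := (g.injective hyv).symm
        by_cases hj1' : j - 1 = 0
        · rw [hj1'] at hyv'
          simp at hyv'
          exact hy1 hyv'
        · exact hy ⟨j - 1, by omega, by omega, hyv'.symm⟩
    have hrep₆inj : Function.Injective rep₆ := by
      intro x y hxy
      by_cases hx : T x <;> by_cases hy : T y
      · rw [hrep₆] at hxy; dsimp only at hxy
        rwa [if_pos hx, if_pos hy] at hxy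
      · exact absurd hxy (by intro h; exact mix₆ x y hx hy h)
      · exact absurd hxy.symm (by intro h; exact mix₆ y x hy hx h)
      · rw [hrep₆] at hxy; dsimp only at hxy
        rw [if_neg hx, if_neg hy] at hxy
        by_cases hx1 : x = a₁ <;> by_cases hy1 : y = a₁
        · rw [hx1, hy1]
        · rw [if_pos hx1, if_neg hy1] at hxy
          exact absurd (g.injective hxy ▸ hTa₂) hy
        · rw [if_neg hx1, if_pos hy1] at hxy
          exact absurd (g.injective hxy.symm ▸ hTa₂) hx
        · rw [if_neg hx1, if_neg hy1] at hxy
          exact g.injective hxy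
    refine ⟨M₅, M₆, bij_of_inj M₅ (fun x y h => hrep₅inj (hM₁inj h)),
      bij_of_inj M₆ (fun x y h => hrep₆inj (hM₁inj h)), ?_⟩
    -- value computations
    have hM₅a₁ : M₅ a₁ = M₂ a₁ := by
      rw [hM₅]; dsimp only; rw [hrep₅]; dsimp only
      rw [if_pos hSa₁]; exact hg a₁
    have hM₅a₂ : M₅ a₂ = M₁ a₁ := by
      rw [hM₅]; dsimp only; rw [hrep₅]; dsimp only
      rw [if_neg hSa₂, if_pos rfl]
    have hM₆a₁ : M₆ a₁ = M₂ a₂ := by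
      rw [hM₆]; dsimp only; rw [hrep₆]; dsimp only
      rw [if_neg hTa₁, if_pos rfl]; exact hg a₂
    have hM₆a₂ : M₆ a₂ = M₁ a₂ := by
      rw [hM₆]; dsimp only; rw [hrep₆]; dsimp only
      rw [if_pos hTa₂]
    apply weight_swap A B M₁ M₂ M₅ M₆ a₁ a₂ hne
    · intro a ha1 ha2
      by_cases hS : S a
      · obtain ⟨j, hj, he⟩ := hS
        have hj0 : j ≠ 0 := by
          intro h
          rw [h] at he
          simp at he
          exact ha1 he.symm
        have hT : T a := ⟨j, by omega, by omega, he⟩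
        have h5 : M₅ a = M₂ a := by
          rw [hM₅]; dsimp only; rw [hrep₅]; dsimp only
          rw [if_pos ⟨j, hj, he⟩]; exact hg a
        have h6 : M₆ a = M₁ a := by
          rw [hM₆]; dsimp only; rw [hrep₆]; dsimp only
          rw [if_pos hT]
        rw [h5, h6]; ring
      · have hT : ¬ T a := by
          rintro ⟨j, hj1, hjk, he⟩
          rcases lt_or_eq_of_le hjk with hlt | heqk
          · exact hS ⟨j, hlt, he⟩
          · exact ha2 (by rw [← he, heqk, hk])
        have h5 : M₅ a = M₁ a := by
          rw [hM₅]; dsimp only; rw [hrep₅]; dsimp only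
          rw [if_neg hS, if_neg ha2]
        have h6 : M₆ a = M₂ a := by
          rw [hM₆]; dsimp only; rw [hrep₆]; dsimp only
          rw [if_neg hT, if_neg ha1]; exact hg a
        rw [h5, h6]
    · rw [hM₅a₁, hM₆a₁]; ring
    · rw [hM₅a₂, hM₆a₂]; ring
  · -- Case 2 : disjoint orbits
    set O : {x // x ∈ A} → Prop := fun a => ∃ j : ℕ, (g ^ j) a₂ = a with hOdef
    have hOa₂ : O a₂ := ⟨0, by simp⟩
    have hOg : ∀ a, O a → O (g a) := by
      rintro a ⟨j, hj⟩
      exact ⟨j + 1, by rw [hsucc, hj]⟩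
    set o := orderOf g with hodef
    have ho : 0 < o := orderOf_pos g
    have hgo : g ^ o = 1 := pow_orderOf_eq_one g
    have hOg' : ∀ a, O (g a) → O a := by
      rintro a ⟨j, hj⟩
      refine ⟨j + (o - 1), ?_⟩
      have e : (g ^ (j + (o - 1))) a₂ = (g ^ (o - 1)) ((g ^ j) a₂) := by
        rw [← hpowg, show o - 1 + j = j + (o - 1) from by omega]
      rw [e, hj]
      have e2 : (g ^ (o - 1)) (g a) = (g ^ (o - 1 + 1)) a := by
        rw [hpowg (o - 1) 1 a, pow_one]
      rw [e2, show o - 1 + 1 = o from by omega, hgo]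
      rfl
    have hOa₁ : ¬ O a₁ := by
      rintro ⟨j, hj⟩
      apply horb
      refine ⟨j * (o - 1), ?_⟩
      have e : (g ^ (j * (o - 1))) a₁ = (g ^ (j * (o - 1))) ((g ^ j) a₂) := by rw [hj]
      rw [e, ← hpowg]
      have hmo : j * (o - 1) + j = j * o := by
        obtain ⟨m, hm⟩ : ∃ m, o = m + 1 := ⟨o - 1, by omega⟩
        rw [hm]
        simp [Nat.add_sub_cancel]
        ring
      rw [hmo, Nat.mul_comm j o, pow_mul, hgo, one_pow]
      rfl
    have hOga₂ : O (g a₂) := hOg a₂ hOa₂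
    set rep₅ : {x // x ∈ A} → {x // x ∈ A} := fun a =>
      if a = a₁ then g a₂ else if a = a₂ then a₁ else if O a then g a else a with hrep₅
    set rep₆ : {x // x ∈ A} → {x // x ∈ A} := fun a =>
      if O a then a else g a with hrep₆
    set M₅ : {x // x ∈ A} → {y // y ∈ B} := fun a => M₁ (rep₅ a) with hM₅
    set M₆ : {x // x ∈ A} → {y // y ∈ B} := fun a => M₁ (rep₆ a) with hM₆
    have hrep₆inj : Function.Injective rep₆ := by
      intro x y hxy
      rw [hrep₆] at hxy; dsimp only at hxy
      by_cases hx : O x <;> by_cases hy : O y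
      · rwa [if_pos hx, if_pos hy] at hxy
      · rw [if_pos hx, if_neg hy] at hxy
        exact absurd (hOg' y (hxy ▸ hx)) hy
      · rw [if_neg hx, if_pos hy] at hxy
        exact absurd (hOg' x (hxy.symm ▸ hy)) hx
      · rw [if_neg hx, if_neg hy] at hxy
        exact g.injective hxy
    have mix₅1 : ∀ x y, x = a₁ → y ≠ a₁ → rep₅ x = rep₅ y → False := by
      intro x y hx1 hy1 hxy
      rw [hrep₅] at hxy; dsimp only at hxy
      rw [if_pos hx1, if_neg hy1] at hxy
      by_cases hy2 : y = a₂
      · rw [if_pos hy2] at hxy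
        exact hOa₁ (hxy ▸ hOga₂)
      · rw [if_neg hy2] at hxy
        by_cases hyO : O y
        · rw [if_pos hyO] at hxy
          exact hy2 (g.injective hxy).symm
        · rw [if_neg hyO] at hxy
          exact hyO (hxy ▸ hOga₂)
    have mix₅2 : ∀ x y, x ≠ a₁ → x = a₂ → y ≠ a₁ → y ≠ a₂ → rep₅ x = rep₅ y → False := by
      intro x y hx1 hx2 hy1 hy2 hxy
      rw [hrep₅] at hxy; dsimp only at hxy
      rw [if_neg hx1, if_pos hx2, if_neg hy1, if_neg hy2] at hxy
      by_cases hyO : O y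
      · rw [if_pos hyO] at hxy
        have : O a₁ := by rw [hxy]; exact hOg y hyO
        exact hOa₁ this
      · rw [if_neg hyO] at hxy
        exact hy1 hxy.symm
    have hrep₅inj : Function.Injective rep₅ := by
      intro x y hxy
      by_cases hx1 : x = a₁ <;> by_cases hy1 : y = a₁
      · rw [hx1, hy1]
      · exact absurd hxy (fun h => mix₅1 x y hx1 hy1 h)
      · exact absurd hxy.symm (fun h => mix₅1 y x hy1 hx1 h)
      · by_cases hx2 : x = a₂ <;> by_cases hy2 : y = a₂
        · rw [hx2, hy2]
        · exact absurd hxy (fun h => mix₅2 x y hx1 hx2 hy1 hy2 h)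
        · exact absurd hxy.symm (fun h => mix₅2 y x hy1 hy2 hx1 hx2 h)
        · rw [hrep₅] at hxy; dsimp only at hxy
          rw [if_neg hx1, if_neg hx2, if_neg hy1, if_neg hy2] at hxy
          by_cases hxO : O x <;> by_cases hyO : O y
          · rw [if_pos hxO, if_pos hyO] at hxy
            exact g.injective hxy
          · rw [if_pos hxO, if_neg hyO] at hxy
            exact absurd (show O y by rw [← hxy]; exact hOg x hxO) hyO
          · rw [if_neg hxO, if_pos hyO] at hxy
            exact absurd (show O x by rw [hxy]; exact hOg y hyO) hxO
          · rwa [if_neg hxO, if_neg hyO] at hxy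
    refine ⟨M₅, M₆, bij_of_inj M₅ (fun x y h => hrep₅inj (hM₁inj h)),
      bij_of_inj M₆ (fun x y h => hrep₆inj (hM₁inj h)), ?_⟩
    have hM₅a₁ : M₅ a₁ = M₂ a₂ := by
      rw [hM₅]; dsimp only; rw [hrep₅]; dsimp only
      rw [if_pos rfl]; exact hg a₂
    have hM₅a₂ : M₅ a₂ = M₁ a₁ := by
      rw [hM₅]; dsimp only; rw [hrep₅]; dsimp only
      rw [if_neg (fun h => hne h.symm), if_pos rfl]
    have hM₆a₁ : M₆ a₁ = M₂ a₁ := by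
      rw [hM₆]; dsimp only; rw [hrep₆]; dsimp only
      rw [if_neg hOa₁]; exact hg a₁
    have hM₆a₂ : M₆ a₂ = M₁ a₂ := by
      rw [hM₆]; dsimp only; rw [hrep₆]; dsimp only
      rw [if_pos hOa₂]
    apply weight_swap A B M₁ M₂ M₅ M₆ a₁ a₂ hne
    · intro a ha1 ha2
      by_cases hO : O a
      · have h5 : M₅ a = M₂ a := by
          rw [hM₅]; dsimp only; rw [hrep₅]; dsimp only
          rw [if_neg ha1, if_neg ha2, if_pos hO]; exact hg a
        have h6 : M₆ a = M₁ a := by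
          rw [hM₆]; dsimp only; rw [hrep₆]; dsimp only
          rw [if_pos hO]
        rw [h5, h6]; ring
      · have h5 : M₅ a = M₁ a := by
          rw [hM₅]; dsimp only; rw [hrep₅]; dsimp only
          rw [if_neg ha1, if_neg ha2, if_neg hO]
        have h6 : M₆ a = M₂ a := by
          rw [hM₆]; dsimp only; rw [hrep₆]; dsimp only
          rw [if_neg hO]; exact hg a
        rw [h5, h6]
    · rw [hM₅a₁, hM₆a₁]; ring
    · rw [hM₅a₂, hM₆a₂]; ring

/-- For disjoint `n`-point sets `A, B` on the grid `{0,…,N}²` with no three points of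
`A ∪ B` collinear: if `M₁` and `M₂` are near-minimum weight perfect matchings (weight
`< w* + 1/(8N⁴)`), then no edge of `M₁` crosses an edge of `M₂`; hence the union of all
near-minimum weight perfect matchings has a straight-line drawing without crossings. -/
theorem stmt_10 (N n : ℕ) (hN : 0 < N) (hn : 0 < n)
    (A B : Finset (EuclideanSpace ℝ (Fin 2)))
    (hAB : Disjoint A B) (hcardA : A.card = n) (hcardB : B.card = n)
    (hgrid : ∀ p ∈ A ∪ B, OnGrid N p)
    (hcol : ∀ P ∈ A ∪ B, ∀ Q ∈ A ∪ B, ∀ R ∈ A ∪ B, P ≠ Q → P ≠ R → Q ≠ R →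
      ¬ Collinear ℝ ({P, Q, R} : Set (EuclideanSpace ℝ (Fin 2))))
    (wstar : ℝ)
    (hwstar : IsLeast {w : ℝ | ∃ M : {x // x ∈ A} → {y // y ∈ B},
      Function.Bijective M ∧ ewWeight A B M = w} wstar)
    (M₁ M₂ : {x // x ∈ A} → {y // y ∈ B})
    (hM₁ : Function.Bijective M₁) (hM₂ : Function.Bijective M₂)
    (hnear₁ : ewWeight A B M₁ < wstar + 1 / (8 * (N : ℝ) ^ 4))
    (hnear₂ : ewWeight A B M₂ < wstar + 1 / (8 * (N : ℝ) ^ 4)) :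
    ∀ a₁ a₂ : {x // x ∈ A}, a₁ ≠ a₂ → M₁ a₁ ≠ M₂ a₂ →
      Disjoint
        (openSegment ℝ (a₁ : EuclideanSpace ℝ (Fin 2)) (M₁ a₁ : EuclideanSpace ℝ (Fin 2)))
        (openSegment ℝ (a₂ : EuclideanSpace ℝ (Fin 2)) (M₂ a₂ : EuclideanSpace ℝ (Fin 2))) := by
  intro a₁ a₂ hne hbne
  by_contra hnd
  rw [Set.not_disjoint_iff] at hnd
  obtain ⟨X, hX1, hX2⟩ := hnd
  have hAmem : ∀ a : {x // x ∈ A}, (a:E2) ∈ A ∪ B := fun a => Finset.mem_union_left B a.2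
  have hBmem : ∀ b : {y // y ∈ B}, (b:E2) ∈ A ∪ B := fun b => Finset.mem_union_right A b.2
  have hABne : ∀ (a : {x // x ∈ A}) (b : {y // y ∈ B}), (a:E2) ≠ (b:E2) := by
    intro a b h
    exact (Finset.disjoint_left.mp hAB a.2) (h ▸ b.2)
  have ha12 : (a₁:E2) ≠ (a₂:E2) := fun h => hne (Subtype.ext h)
  have hb12 : ((M₁ a₁):E2) ≠ ((M₂ a₂):E2) := fun h => hbne (Subtype.ext h)
  have hgap := gap_lemma N hN (a₁:E2) ((M₁ a₁):E2) (a₂:E2) ((M₂ a₂):E2)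
    (hgrid _ (hAmem a₁)) (hgrid _ (hBmem (M₁ a₁)))
    (hgrid _ (hAmem a₂)) (hgrid _ (hBmem (M₂ a₂)))
    (hcol _ (hAmem a₂) _ (hBmem (M₂ a₂)) _ (hAmem a₁)
      (hABne a₂ (M₂ a₂)) ha12.symm (hABne a₁ (M₂ a₂)).symm)
    (hcol _ (hAmem a₂) _ (hBmem (M₂ a₂)) _ (hBmem (M₁ a₁))
      (hABne a₂ (M₂ a₂)) (hABne a₂ (M₁ a₁)) hb12.symm)
    (hcol _ (hAmem a₁) _ (hBmem (M₁ a₁)) _ (hAmem a₂)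
      (hABne a₁ (M₁ a₁)) ha12 (hABne a₂ (M₁ a₁)).symm)
    (hcol _ (hAmem a₁) _ (hBmem (M₁ a₁)) _ (hBmem (M₂ a₂))
      (hABne a₁ (M₁ a₁)) (hABne a₁ (M₂ a₂)) hb12)
    X hX1 hX2
  obtain ⟨M₅, M₆, bij₅, bij₆, hw⟩ := exchange A B n hcardA hcardB M₁ M₂ hM₁ hM₂ a₁ a₂ hne
  have h5 : wstar ≤ ewWeight A B M₅ := hwstar.2 ⟨M₅, bij₅, rfl⟩
  have h6 : wstar ≤ ewWeight A B M₆ := hwstar.2 ⟨M₆, bij₆, rfl⟩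
  have hNpos : (0:ℝ) < (N:ℝ)^4 := by positivity
  have hhalf : 1/(4*(N:ℝ)^4) = 2 * (1/(8*(N:ℝ)^4)) := by
    field_simp
    ring
  linarith [hgap, hw, hnear₁, hnear₂, h5, h6, hhalf]
end
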